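/- arXiv:2409.02858 — 3 statements merged into one kernel-verified Lean document; each statement's English description precedes it below -/
import Mathlib

section
/- If two permutations π, π' of a finite set X both have a subset C appearing consecutively (as a contiguous block of positions), and they induce the same order on X∖C and place the block of C between the same two neighboring elements of X∖C (i.e., the set of elements of X∖C preceding the block is identical), then inv(π, π') = inv(π[C], π'[C]). -/
/-- A permutation of a finite set is modeled as a duplicate-free list; `inv l l'`
counts the unordered pairs of distinct elements on whose relative order the two
permutations disagree (each disagreeing pair counted exactly once). -/
def inv {α : Type*} [DecidableEq α] (l l' : List α) : ℕ :=
  ((l.toFinset ×ˢ l.toFinset).filter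
    (fun p => l.idxOf p.1 < l.idxOf p.2 ∧ l'.idxOf p.2 < l'.idxOf p.1)).card

/-- `restrict l Z` is the restriction `π[Z]` of the linear order `l` to `Z`. -/
def restrict {α : Type*} [DecidableEq α] (l : List α) (Z : Finset α) : List α :=
  l.filter (· ∈ Z)

/-- If two permutations `π = p ++ m ++ s` and `π' = p' ++ m' ++ s'` of a finite set
`X` both have the subset `C` appearing consecutively (as the contiguous blocks
`m`, `m'`), induce the same order on `X ∖ C`, and place the block of `C` between
the same two neighboring elements of `X ∖ C` (i.e. the set of elements of `X ∖ C`
preceding the block is identical: `p` and `p'` have the same elements), then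
`inv(π, π') = inv(π[C], π'[C])`. -/
theorem inv_consecutive_block {α : Type*} [DecidableEq α] (X C : Finset α)
    (p m s p' m' s' : List α)
    (hn : (p ++ m ++ s).Nodup) (hn' : (p' ++ m' ++ s').Nodup)
    (hX : (p ++ m ++ s).toFinset = X) (hX' : (p' ++ m' ++ s').toFinset = X)
    (hm : m.toFinset = C) (hm' : m'.toFinset = C)
    (hout : restrict (p ++ m ++ s) (X \ C) = restrict (p' ++ m' ++ s') (X \ C))
    (hpre : p.toFinset = p'.toFinset) :
    inv (p ++ m ++ s) (p' ++ m' ++ s') =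
      inv (restrict (p ++ m ++ s) C) (restrict (p' ++ m' ++ s') C) := by
  classical
  -- nodup decompositions
  have hn1 : (p ++ (m ++ s)).Nodup := by rwa [← List.append_assoc]
  obtain ⟨hpnd, hmsnd, hpdisj⟩ := List.nodup_append'.mp hn1
  obtain ⟨hmnd, hsnd, hmsdisj⟩ := List.nodup_append'.mp hmsnd
  have hn1' : (p' ++ (m' ++ s')).Nodup := by rwa [← List.append_assoc]
  obtain ⟨hpnd', hmsnd', hpdisj'⟩ := List.nodup_append'.mp hn1'
  obtain ⟨hmnd', hsnd', hmsdisj'⟩ := List.nodup_append'.mp hmsnd'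
  have hmemC : ∀ x, x ∈ C ↔ x ∈ m := fun x => by rw [← hm, List.mem_toFinset]
  have hmemC' : ∀ x, x ∈ C ↔ x ∈ m' := fun x => by rw [← hm', List.mem_toFinset]
  have hXmem : ∀ x, x ∈ X ↔ x ∈ p ∨ x ∈ m ∨ x ∈ s := by
    intro x; rw [← hX]; simp
  have hXmem' : ∀ x, x ∈ X ↔ x ∈ p' ∨ x ∈ m' ∨ x ∈ s' := by
    intro x; rw [← hX']; simp
  -- p, s elements are outside C; m elements inside
  have hpC : ∀ x ∈ p, x ∉ C := fun x hx hc =>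
    hpdisj hx (List.mem_append_left _ ((hmemC x).mp hc))
  have hsC : ∀ x ∈ s, x ∉ C := fun x hx hc => hmsdisj ((hmemC x).mp hc) hx
  have hpC' : ∀ x ∈ p', x ∉ C := fun x hx hc =>
    hpdisj' hx (List.mem_append_left _ ((hmemC' x).mp hc))
  have hsC' : ∀ x ∈ s', x ∉ C := fun x hx hc => hmsdisj' ((hmemC' x).mp hc) hx
  -- restrictions
  have hres : restrict (p ++ m ++ s) C = m := by
    have e1 : p.filter (· ∈ C) = [] :=
      List.filter_eq_nil_iff.mpr (by intro a ha; simpa using hpC a ha)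
    have e2 : s.filter (· ∈ C) = [] :=
      List.filter_eq_nil_iff.mpr (by intro a ha; simpa using hsC a ha)
    have e3 : m.filter (· ∈ C) = m :=
      List.filter_eq_self.mpr (by intro a ha; simpa using (hmemC a).mpr ha)
    simp only [restrict, List.filter_append, e1, e2, e3]
    simp
  have hres' : restrict (p' ++ m' ++ s') C = m' := by
    have e1 : p'.filter (· ∈ C) = [] :=
      List.filter_eq_nil_iff.mpr (by intro a ha; simpa using hpC' a ha)
    have e2 : s'.filter (· ∈ C) = [] :=
      List.filter_eq_nil_iff.mpr (by intro a ha; simpa using hsC' a ha)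
    have e3 : m'.filter (· ∈ C) = m' :=
      List.filter_eq_self.mpr (by intro a ha; simpa using (hmemC' a).mpr ha)
    simp only [restrict, List.filter_append, e1, e2, e3]
    simp
  -- restriction to X \ C gives p ++ s
  have houtres : restrict (p ++ m ++ s) (X \ C) = p ++ s := by
    have e1 : m.filter (· ∈ X \ C) = [] :=
      List.filter_eq_nil_iff.mpr (by
        intro a ha; simp only [Finset.mem_sdiff, decide_eq_true_eq, not_and, not_not]
        exact fun _ => (hmemC a).mpr ha)
    have e2 : p.filter (· ∈ X \ C) = p :=
      List.filter_eq_self.mpr (by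
        intro a ha; simp only [Finset.mem_sdiff, decide_eq_true_eq]
        exact ⟨(hXmem a).mpr (Or.inl ha), hpC a ha⟩)
    have e3 : s.filter (· ∈ X \ C) = s :=
      List.filter_eq_self.mpr (by
        intro a ha; simp only [Finset.mem_sdiff, decide_eq_true_eq]
        exact ⟨(hXmem a).mpr (Or.inr (Or.inr ha)), hsC a ha⟩)
    simp only [restrict, List.filter_append, e1, e2, e3]
    simp
  have houtres' : restrict (p' ++ m' ++ s') (X \ C) = p' ++ s' := by
    have e1 : m'.filter (· ∈ X \ C) = [] :=
      List.filter_eq_nil_iff.mpr (by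
        intro a ha; simp only [Finset.mem_sdiff, decide_eq_true_eq, not_and, not_not]
        exact fun _ => (hmemC' a).mpr ha)
    have e2 : p'.filter (· ∈ X \ C) = p' :=
      List.filter_eq_self.mpr (by
        intro a ha; simp only [Finset.mem_sdiff, decide_eq_true_eq]
        exact ⟨(hXmem' a).mpr (Or.inl ha), hpC' a ha⟩)
    have e3 : s'.filter (· ∈ X \ C) = s' :=
      List.filter_eq_self.mpr (by
        intro a ha; simp only [Finset.mem_sdiff, decide_eq_true_eq]
        exact ⟨(hXmem' a).mpr (Or.inr (Or.inr ha)), hsC' a ha⟩)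
    simp only [restrict, List.filter_append, e1, e2, e3]
    simp
  rw [houtres, houtres'] at hout
  have hplen : p.length = p'.length := by
    rw [← List.toFinset_card_of_nodup hpnd, ← List.toFinset_card_of_nodup hpnd', hpre]
  obtain ⟨hpp, hss⟩ := List.append_inj hout hplen
  subst hpp; subst hss
  have hmlen : m.length = m'.length := by
    rw [← List.toFinset_card_of_nodup hmnd, ← List.toFinset_card_of_nodup hmnd', hm, hm']
  -- index computations
  have idxm : ∀ a ∈ m, (p ++ m ++ s).idxOf a = p.length + m.idxOf a := by
    intro a ha
    rw [List.append_assoc,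
      List.idxOf_append_of_notMem (fun h => hpdisj h (List.mem_append_left _ ha)),
      List.idxOf_append_of_mem ha]
  have idxm' : ∀ a ∈ m', (p ++ m' ++ s).idxOf a = p.length + m'.idxOf a := by
    intro a ha
    rw [List.append_assoc,
      List.idxOf_append_of_notMem (fun h => hpdisj' h (List.mem_append_left _ ha)),
      List.idxOf_append_of_mem ha]
  have idxp : ∀ a ∈ p, ∀ t : List α, (p ++ t).idxOf a = p.idxOf a :=
    fun a ha t => List.idxOf_append_of_mem ha
  have idxs : ∀ a ∈ s, (p ++ m ++ s).idxOf a = p.length + (m.length + s.idxOf a) := by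
    intro a ha
    rw [List.append_assoc,
      List.idxOf_append_of_notMem (fun h => hpdisj h (List.mem_append_right _ ha)),
      List.idxOf_append_of_notMem (fun h => hmsdisj h ha)]
  have idxs' : ∀ a ∈ s, (p ++ m' ++ s).idxOf a = p.length + (m'.length + s.idxOf a) := by
    intro a ha
    rw [List.append_assoc,
      List.idxOf_append_of_notMem (fun h => hpdisj' h (List.mem_append_right _ ha)),
      List.idxOf_append_of_notMem (fun h => hmsdisj' h ha)]
  rw [hres, hres']
  simp only [inv, hX, hm]
  have hsets : ((X ×ˢ X).filter
      (fun q => (p ++ m ++ s).idxOf q.1 < (p ++ m ++ s).idxOf q.2 ∧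
        (p ++ m' ++ s).idxOf q.2 < (p ++ m' ++ s).idxOf q.1)) =
      ((C ×ˢ C).filter
      (fun q => m.idxOf q.1 < m.idxOf q.2 ∧ m'.idxOf q.2 < m'.idxOf q.1)) := by
    ext ⟨a, b⟩
    simp only [Finset.mem_filter, Finset.mem_product]
    constructor
    · rintro ⟨⟨haX, hbX⟩, h1, h2⟩
      by_cases haC : a ∈ C <;> by_cases hbC : b ∈ C
      · refine ⟨⟨haC, hbC⟩, ?_, ?_⟩
        · rw [idxm a ((hmemC a).mp haC), idxm b ((hmemC b).mp hbC)] at h1; omega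
        · rw [idxm' a ((hmemC' a).mp haC), idxm' b ((hmemC' b).mp hbC)] at h2; omega
      · exfalso
        have hma := (hmemC a).mp haC
        have hia := idxm a hma
        have hia' := idxm' a ((hmemC' a).mp haC)
        have hba : m.idxOf a < m.length := List.idxOf_lt_length_iff.mpr hma
        have hba' : m'.idxOf a < m'.length :=
          List.idxOf_lt_length_iff.mpr ((hmemC' a).mp haC)
        rcases (hXmem b).mp hbX with hb | hb | hb
        · have h3 := idxp b hb (m ++ s)
          have h4 : p.idxOf b < p.length := List.idxOf_lt_length_iff.mpr hb
          rw [← List.append_assoc] at h3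
          rw [h3, hia] at h1; omega
        · exact hbC ((hmemC b).mpr hb)
        · have h3 := idxs' b hb
          rw [h3, hia'] at h2; omega
      · exfalso
        have hmb := (hmemC b).mp hbC
        have hib := idxm b hmb
        have hib' := idxm' b ((hmemC' b).mp hbC)
        have hbb : m.idxOf b < m.length := List.idxOf_lt_length_iff.mpr hmb
        have hbb' : m'.idxOf b < m'.length :=
          List.idxOf_lt_length_iff.mpr ((hmemC' b).mp hbC)
        rcases (hXmem a).mp haX with ha | ha | ha
        · have h3 := idxp a ha (m' ++ s)
          have h4 : p.idxOf a < p.length := List.idxOf_lt_length_iff.mpr ha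
          rw [← List.append_assoc] at h3
          rw [h3, hib'] at h2; omega
        · exact haC ((hmemC a).mpr ha)
        · have h3 := idxs a ha
          rw [h3, hib] at h1; omega
      · exfalso
        have ea : (p ++ m ++ s).idxOf a = (p ++ m' ++ s).idxOf a := by
          rcases (hXmem a).mp haX with ha | ha | ha
          · have e1 := idxp a ha (m ++ s); have e2 := idxp a ha (m' ++ s)
            rw [← List.append_assoc] at e1 e2; rw [e1, e2]
          · exact absurd ((hmemC a).mpr ha) haC
          · rw [idxs a ha, idxs' a ha, hmlen]
        have eb : (p ++ m ++ s).idxOf b = (p ++ m' ++ s).idxOf b := by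
          rcases (hXmem b).mp hbX with hb | hb | hb
          · have e1 := idxp b hb (m ++ s); have e2 := idxp b hb (m' ++ s)
            rw [← List.append_assoc] at e1 e2; rw [e1, e2]
          · exact absurd ((hmemC b).mpr hb) hbC
          · rw [idxs b hb, idxs' b hb, hmlen]
        omega
    · rintro ⟨⟨haC, hbC⟩, h1, h2⟩
      have hma := (hmemC a).mp haC
      have hmb := (hmemC b).mp hbC
      refine ⟨⟨(hXmem a).mpr (Or.inr (Or.inl hma)), (hXmem b).mpr (Or.inr (Or.inl hmb))⟩,
        ?_, ?_⟩
      · rw [idxm a hma, idxm b hmb]; omega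
      · rw [idxm' a ((hmemC' a).mp haC), idxm' b ((hmemC' b).mp hbC)]; omega
  rw [hsets]
end

section
/- From any solution S of a storyline instance one can construct a type-2-consistent solution S' with cr(S') ≤ cr(S); moreover if S is type-1-consistent then S' can be taken type-1-consistent as well. -/
/-- `C` appears consecutively in `l` if the elements of `C` occupy a contiguous
range of positions of `l`. -/
def ConsecutiveIn {α : Type*} [DecidableEq α] (C : Finset α) (l : List α) : Prop :=
  ∃ p m s : List α, l = p ++ m ++ s ∧ m.toFinset = C

/-- A storyline instance: time steps are `0, 1, …, len - 1`; `AC i` is the set of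
characters active at time step `i` (each character is active on a consecutive
interval of time steps, and no character is active outside the time range); an
interaction is a pair `(time, character set)` whose characters are all active at
its time step; interactions occurring at the same time step have pairwise
disjoint character sets. -/
structure SLInstance (α : Type*) [DecidableEq α] where
  /-- number of time steps -/
  len : ℕ
  /-- active characters at each time step -/
  AC : ℕ → Finset α
  /-- interactions, as pairs (time step, set of participating characters) -/
  inters : Finset (ℕ × Finset α)
  outside : ∀ i, len ≤ i → AC i = ∅
  consecA : ∀ c : α, ∀ i j k : ℕ, i ≤ j → j ≤ k → c ∈ AC i → c ∈ AC k → c ∈ AC j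
  valid : ∀ p ∈ inters, p.1 < len ∧ p.2 ⊆ AC p.1
  disj : ∀ p ∈ inters, ∀ q ∈ inters, p.1 = q.1 → p ≠ q → Disjoint p.2 q.2

/-- A solution (storyline drawing) of a storyline instance: for each time step a
permutation (duplicate-free list) of its active characters, in which the character
set of every interaction at that time step appears consecutively. -/
structure SLSolution {α : Type*} [DecidableEq α] (P : SLInstance α) where
  /-- the permutation of active characters at each time step -/
  ord : ℕ → List α
  nodup : ∀ i, (ord i).Nodup
  perm : ∀ i, (ord i).toFinset = P.AC i
  consec : ∀ p ∈ P.inters, ConsecutiveIn p.2 (ord p.1)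

/-- The number of crossings of a storyline solution: the sum, over consecutive
time steps, of the inversions between the two permutations restricted to the
commonly active characters. -/
def crS {α : Type*} [DecidableEq α] (P : SLInstance α) (S : SLSolution P) : ℕ :=
  ∑ i ∈ Finset.range (P.len - 1),
    inv (restrict (S.ord i) (P.AC i ∩ P.AC (i + 1)))
        (restrict (S.ord (i + 1)) (P.AC i ∩ P.AC (i + 1)))

/-- `IConsistent P S i C` expresses that the solution `S` is `I`-consistent for an
interaction `I` with time step `i` and character set `C`: for every time step `j ≤ i`
such that all of `C` is active throughout `[j, i]` and at every intermediate time
step `k` (with `j < k ≤ i`) either no character of `C` participates in any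
interaction at `k` or some interaction at `k` contains all of `C`, the induced
order of `C` is the same at every time step of `[j, i]` as at `i`. (Requiring this
for every such `j` is equivalent to requiring it for the minimal one, `j(I)`.) -/
def IConsistent {α : Type*} [DecidableEq α] (P : SLInstance α) (S : SLSolution P)
    (i : ℕ) (C : Finset α) : Prop :=
  ∀ j ≤ i, (∀ k, j ≤ k → k ≤ i → C ⊆ P.AC k) →
    (∀ k, j < k → k ≤ i →
      ((∀ p ∈ P.inters, p.1 = k → Disjoint p.2 C) ∨
        ∃ p ∈ P.inters, p.1 = k ∧ C ⊆ p.2)) →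
    ∀ k, j ≤ k → k ≤ i → restrict (S.ord k) C = restrict (S.ord i) C

/-- A solution is type-1-consistent if it is `I`-consistent for every
interaction `I`. -/
def Type1Consistent {α : Type*} [DecidableEq α] (P : SLInstance α)
    (S : SLSolution P) : Prop :=
  ∀ p ∈ P.inters, IConsistent P S p.1 p.2

/-- A solution is type-2-consistent if for every pair of interactions `I₁, I₂`
with the same character set `C`, times `i < j`, such that at every intermediate
time step `k` (with `i < k < j`) either no character of `C` participates in any
interaction at `k` or some interaction at `k` contains all of `C`, the characters
of `C` are kept together at every intermediate time step: `π_k` can be written as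
`π^a ⋆ π_i[C] ⋆ π^b`. -/
def Type2Consistent {α : Type*} [DecidableEq α] (P : SLInstance α)
    (S : SLSolution P) : Prop :=
  ∀ (i j : ℕ) (C : Finset α), (i, C) ∈ P.inters → (j, C) ∈ P.inters → i < j →
    (∀ k, i < k → k < j →
      ((∀ p ∈ P.inters, p.1 = k → Disjoint p.2 C) ∨
        ∃ p ∈ P.inters, p.1 = k ∧ C ⊆ p.2)) →
    ∀ k, i < k → k < j →
      ∃ a b : List α, S.ord k = a ++ restrict (S.ord i) C ++ b


set_option linter.unusedSectionVars false
set_option maxHeartbeats 1000000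


set_option linter.unusedSectionVars false

namespace SLAux
variable {α : Type*} [DecidableEq α]

/-- `u` strictly before `v` in list `l`. -/
def Bef (l : List α) (u v : α) : Prop := u ≠ v ∧ [u, v].Sublist l

theorem Bef.ne {l : List α} {u v : α} (h : Bef l u v) : u ≠ v := h.1

theorem Bef.mem_left {l : List α} {u v : α} (h : Bef l u v) : u ∈ l :=
  h.2.subset (by simp)

theorem Bef.mem_right {l : List α} {u v : α} (h : Bef l u v) : v ∈ l :=
  h.2.subset (by simp)

theorem Bef.mono {l L : List α} {u v : α} (h : Bef l u v) (hs : l.Sublist L) : Bef L u v :=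
  ⟨h.1, h.2.trans hs⟩

theorem bef_append_left {A B : List α} {u v : α} (h : Bef A u v) : Bef (A ++ B) u v :=
  h.mono (List.sublist_append_left A B)

theorem bef_append_right {A B : List α} {u v : α} (h : Bef B u v) : Bef (A ++ B) u v :=
  h.mono (List.sublist_append_right A B)

theorem bef_append_cross {A B : List α} {u v : α} (hu : u ∈ A) (hv : v ∈ B) (huv : u ≠ v) :
    Bef (A ++ B) u v := by
  refine ⟨huv, ?_⟩
  have : ([u] ++ [v]).Sublist (A ++ B) :=
    List.Sublist.append (List.singleton_sublist.2 hu) (List.singleton_sublist.2 hv)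
  simpa using this

theorem pair_sublist_append {A B : List α} {u v : α} (h : ([u, v] : List α).Sublist (A ++ B)) :
    ([u, v] : List α).Sublist A ∨ ([u, v] : List α).Sublist B ∨ (u ∈ A ∧ v ∈ B) := by
  rw [List.sublist_append_iff] at h
  obtain ⟨l₁, l₂, heq, h1, h2⟩ := h
  rcases l₁ with _ | ⟨x, _ | ⟨y, _ | ⟨z, t⟩⟩⟩
  · simp only [List.nil_append] at heq
    subst heq; exact Or.inr (Or.inl h2)
  · simp only [List.cons_append, List.nil_append] at heq
    injection heq with e1 e2
    subst e1
    have hv' : v ∈ l₂ := by rw [← e2]; simp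
    exact Or.inr (Or.inr ⟨h1.subset (by simp), h2.subset hv'⟩)
  · simp only [List.cons_append, List.nil_append] at heq
    injection heq with e1 e2
    injection e2 with e3 e4
    subst e1; subst e3
    exact Or.inl h1
  · exfalso
    have := congrArg List.length heq
    simp at this

theorem bef_append_elim {A B : List α} {u v : α} (h : Bef (A ++ B) u v) :
    Bef A u v ∨ Bef B u v ∨ (u ∈ A ∧ v ∈ B) := by
  rcases pair_sublist_append h.2 with h' | h' | h'
  · exact Or.inl ⟨h.1, h'⟩
  · exact Or.inr (Or.inl ⟨h.1, h'⟩)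
  · exact Or.inr (Or.inr h')

theorem bef_cons_elim {a : α} {B : List α} {u v : α} (h : Bef (a :: B) u v) :
    Bef B u v ∨ (u = a ∧ v ∈ B) := by
  rcases List.sublist_cons_iff.1 h.2 with h' | ⟨r, hr, hrs⟩
  · exact Or.inl ⟨h.1, h'⟩
  · injection hr with e1 e2
    subst e1
    refine Or.inr ⟨rfl, ?_⟩
    have : v ∈ r := by rw [← e2]; simp
    exact hrs.subset this

/-- bridge with indexOf -/
theorem indexOf_lt_iff_bef {l : List α} (hl : l.Nodup) {u v : α} (hu : u ∈ l) (hv : v ∈ l) :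
    l.idxOf u < l.idxOf v ↔ Bef l u v := by
  induction l with
  | nil => simp at hu
  | cons a t ih =>
    rcases List.nodup_cons.1 hl with ⟨hat, ht⟩
    by_cases huv : u = v
    · subst huv
      simp only [lt_self_iff_false, false_iff]
      exact fun h => h.1 rfl
    by_cases hua : u = a
    · subst hua
      have hvt : v ∈ t := by
        rcases List.mem_cons.1 hv with h | h
        · exact absurd h.symm huv
        · exact h
      constructor
      · intro _
        exact ⟨huv, List.cons_sublist_cons.2 (List.singleton_sublist.2 hvt)⟩
      · intro _
        rw [List.idxOf_cons, List.idxOf_cons]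
        simp only [beq_self_eq_true, cond_true]
        have : (u == v) = false := by simp [huv]
        simp [this, Ne.symm huv]
    · by_cases hva : v = a
      · subst hva
        constructor
        · intro h
          exfalso
          rw [List.idxOf_cons, List.idxOf_cons] at h
          simp [hua, Ne.symm huv] at h
        · intro h
          exfalso
          rcases bef_cons_elim h with h' | ⟨h1, h2⟩
          · exact hat h'.mem_right
          · exact hua h1
      · have hut : u ∈ t := by
          rcases List.mem_cons.1 hu with h | h
          · exact absurd h hua
          · exact h
        have hvt : v ∈ t := by
          rcases List.mem_cons.1 hv with h | h
          · exact absurd h hva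
          · exact h
        rw [List.idxOf_cons, List.idxOf_cons]
        have e1 : (a == u) = false := by simp [Ne.symm hua]
        have e2 : (a == v) = false := by simp [Ne.symm hva]
        simp only [e1, e2, cond_false]
        rw [Nat.add_lt_add_iff_right, ih ht hut hvt]
        constructor
        · intro h
          exact h.mono (List.sublist_cons_self a t)
        · intro h
          rcases bef_cons_elim h with h' | ⟨h1, h2⟩
          · exact h'
          · exact absurd h1 hua

theorem bef_total {l : List α} (hl : l.Nodup) {u v : α} (hu : u ∈ l) (hv : v ∈ l)
    (huv : u ≠ v) : Bef l u v ∨ Bef l v u := by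
  rcases lt_trichotomy (l.idxOf u) (l.idxOf v) with h | h | h
  · exact Or.inl ((indexOf_lt_iff_bef hl hu hv).1 h)
  · exact absurd ((List.idxOf_inj hu).1 h) huv
  · exact Or.inr ((indexOf_lt_iff_bef hl hv hu).1 h)

theorem bef_asymm {l : List α} (hl : l.Nodup) {u v : α} (h : Bef l u v) : ¬ Bef l v u := by
  intro h'
  have h1 := (indexOf_lt_iff_bef hl h.mem_left h.mem_right).2 h
  have h2 := (indexOf_lt_iff_bef hl h'.mem_left h'.mem_right).2 h'
  omega

theorem bef_filter_iff {l : List α} {p : α → Bool} {u v : α} (hpu : p u) (hpv : p v) :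
    Bef (l.filter p) u v ↔ Bef l u v := by
  constructor
  · intro h
    exact h.mono (List.filter_sublist : List.Sublist (l.filter p) l)
  · intro h
    refine ⟨h.1, ?_⟩
    have := h.2.filter p
    simpa [hpu, hpv] using this

/-- in a list with a contiguous block `m` whose elements are exactly `C`, all
elements of `C` compare identically against any `x ∉ C`. -/
theorem bef_block {l p m s : List α} (hl : l.Nodup) (hsplit : l = p ++ m ++ s)
    {C : Finset α} (hm : ∀ y, y ∈ m ↔ y ∈ C) {c c' x : α} (hc : c ∈ C) (hc' : c' ∈ C)
    (hx : x ∉ C) (hxl : x ∈ l) :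
    (Bef l c x ↔ Bef l c' x) ∧ (Bef l x c ↔ Bef l x c') := by
  subst hsplit
  have hxm : x ∉ m := fun h => hx ((hm x).1 h)
  have hxps : x ∈ p ∨ x ∈ s := by
    rcases List.mem_append.1 hxl with h | h
    · rcases List.mem_append.1 h with h' | h'
      · exact Or.inl h'
      · exact absurd h' hxm
    · exact Or.inr h
  have hcm : c ∈ m := (hm c).2 hc
  have hcm' : c' ∈ m := (hm c').2 hc'
  have hcx : c ≠ x := fun h => hx (h ▸ hc)
  have hcx' : c' ≠ x := fun h => hx (h ▸ hc')
  rcases hxps with hxp | hxs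
  · -- x in prefix: x before every element of the block
    have key : ∀ y ∈ m, Bef (p ++ m ++ s) x y := by
      intro y hy
      have : Bef (p ++ (m ++ s)) x y :=
        bef_append_cross hxp (List.mem_append.2 (Or.inl hy)) (fun h => hxm (h ▸ hy))
      simpa [List.append_assoc] using this
    have k1 := key c hcm
    have k2 := key c' hcm'
    exact ⟨iff_of_false (bef_asymm hl k1) (bef_asymm hl k2), iff_of_true k1 k2⟩
  · have key : ∀ y ∈ m, Bef (p ++ m ++ s) y x := by
      intro y hy
      exact bef_append_cross (List.mem_append.2 (Or.inr hy)) hxs (fun h => hxm (h ▸ hy))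
    have k1 := key c hcm
    have k2 := key c' hcm'
    exact ⟨iff_of_true k1 k2, iff_of_false (bef_asymm hl k1) (bef_asymm hl k2)⟩

end SLAux




namespace SLAux
variable {α : Type*} [DecidableEq α]

variable (C : Finset α) (cs : α) (σ : List α)

/-- expansion map -/
def gexp (x : α) : List α := if x = cs then σ else [x]

/-- keep predicate -/
def keep (x : α) : Bool := decide (x ∉ C) || decide (x = cs)

/-- gather the elements of `C` into a block `σ` at the position of `cs`. -/
def gather (l : List α) : List α := (l.filter (keep C cs)).flatMap (gexp cs σ)

variable {C cs σ}

theorem gather_append (l₁ l₂ : List α) :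
    gather C cs σ (l₁ ++ l₂) = gather C cs σ l₁ ++ gather C cs σ l₂ := by
  simp [gather, List.filter_append, List.flatMap_append]

theorem flatMap_gexp_of_not_cs {t : List α} (h : ∀ x ∈ t, x ≠ cs) :
    t.flatMap (gexp cs σ) = t := by
  induction t with
  | nil => simp
  | cons a t ih =>
    rw [List.flatMap_cons]
    rw [ih (fun x hx => h x (List.mem_cons_of_mem a hx))]
    have : gexp cs σ a = [a] := by simp [gexp, h a (List.mem_cons_self : a ∈ a :: t)]
    rw [this]; rfl

theorem gather_of_not_mem (hcs : cs ∈ C) {l : List α} (h : ∀ x ∈ l, x ∉ C) :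
    gather C cs σ l = l := by
  have h1 : l.filter (keep C cs) = l :=
    List.filter_eq_self.2 (fun a ha => by simp [keep, h a ha])
  rw [gather, h1, flatMap_gexp_of_not_cs]
  intro x hx hxc
  exact h x hx (hxc ▸ hcs)

theorem gather_split (hcs : cs ∈ C) {a b : List α} (ha : cs ∉ a) (hb : cs ∉ b) :
    gather C cs σ (a ++ cs :: b) =
      a.filter (fun x => decide (x ∉ C)) ++ σ ++ b.filter (fun x => decide (x ∉ C)) := by
  rw [gather]
  have hfa : ∀ t : List α, cs ∉ t → t.filter (keep C cs) = t.filter (fun x => decide (x ∉ C)) := by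
    intro t ht
    apply List.filter_congr
    intro x hx
    have : x ≠ cs := fun h => ht (h ▸ hx)
    simp [keep, this]
  have never : ∀ t : List α, ∀ x ∈ t.filter (fun x => decide (x ∉ C)), x ≠ cs := by
    intro t x hx h
    subst h
    have := (List.mem_filter.1 hx).2
    simp at this
    exact this hcs
  rw [List.filter_append, List.filter_cons]
  have : keep C cs cs = true := by simp [keep]
  simp only [this, if_pos]
  rw [hfa a ha, hfa b hb]
  rw [List.flatMap_append, List.flatMap_cons]
  rw [flatMap_gexp_of_not_cs (never a), flatMap_gexp_of_not_cs (never b)]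
  have : gexp cs σ cs = σ := by simp [gexp]
  rw [this]
  simp

theorem exists_split {l : List α} (hl : l.Nodup) (hcl : cs ∈ l) :
    ∃ a b, l = a ++ cs :: b ∧ cs ∉ a ∧ cs ∉ b := by
  obtain ⟨a, b, rfl⟩ := List.append_of_mem hcl
  have h2 := hl
  rw [List.nodup_append'] at h2
  obtain ⟨-, h3, h4⟩ := h2
  refine ⟨a, b, rfl, ?_, ?_⟩
  · intro h
    exact h4 h (List.mem_cons_self : cs ∈ cs :: b)
  · exact (List.nodup_cons.1 h3).1

end SLAux

namespace SLAux
variable {α : Type*} [DecidableEq α]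
variable {C : Finset α} {cs : α} {σ : List α}

theorem mem_nc_filter {t : List α} {x : α} :
    x ∈ t.filter (fun y => decide (y ∉ C)) ↔ x ∈ t ∧ x ∉ C := by
  simp [List.mem_filter]

section core
variable (hcs : cs ∈ C) (hσn : σ.Nodup) (hσF : σ.toFinset = C)
include hcs hσn hσF

theorem mem_sigma_iff {x : α} : x ∈ σ ↔ x ∈ C := by
  rw [← hσF]; simp

theorem gather_nodup {l : List α} (hl : l.Nodup) (hcl : cs ∈ l) :
    (gather C cs σ l).Nodup := by
  obtain ⟨a, b, rfl, ha, hb⟩ := exists_split hl hcl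
  have h2 := hl
  rw [List.nodup_append'] at h2
  obtain ⟨hna, hnb, hdisj⟩ := h2
  rw [gather_split hcs ha hb]
  rw [List.append_assoc, List.nodup_append']
  refine ⟨hna.filter _, ?_, ?_⟩
  · rw [List.nodup_append']
    refine ⟨hσn, (List.nodup_cons.1 hnb).2.filter _, ?_⟩
    intro x hxσ hxf
    exact (mem_nc_filter.1 hxf).2 ((mem_sigma_iff hcs hσn hσF).1 hxσ)
  · intro x hxf hx2
    obtain ⟨hxa, hxC⟩ := mem_nc_filter.1 hxf
    rcases List.mem_append.1 hx2 with h | h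
    · exact hxC ((mem_sigma_iff hcs hσn hσF).1 h)
    · exact hdisj hxa (List.mem_cons_of_mem cs (mem_nc_filter.1 h).1)

theorem gather_toFinset {l : List α} (hl : l.Nodup) (hcl : cs ∈ l) (hC : C ⊆ l.toFinset) :
    (gather C cs σ l).toFinset = l.toFinset := by
  obtain ⟨a, b, rfl, ha, hb⟩ := exists_split hl hcl
  rw [gather_split hcs ha hb]
  ext x
  simp only [List.toFinset_append, Finset.mem_union, List.mem_toFinset, mem_nc_filter,
    List.mem_append, List.mem_cons]
  constructor
  · rintro ((⟨hxa, -⟩ | hσ) | ⟨hxb, -⟩)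
    · exact Or.inl hxa
    · have hxC := (mem_sigma_iff hcs hσn hσF).1 hσ
      have := hC hxC
      simp at this
      tauto
    · exact Or.inr (Or.inr hxb)
  · intro h
    by_cases hxC : x ∈ C
    · exact Or.inl (Or.inr ((mem_sigma_iff hcs hσn hσF).2 hxC))
    · rcases h with h | h | h
      · exact Or.inl (Or.inl ⟨h, hxC⟩)
      · exact absurd (h ▸ hcs) hxC
      · exact Or.inr ⟨h, hxC⟩

end core
end SLAux

namespace SLAux
variable {α : Type*} [DecidableEq α]
variable {C D : Finset α} {cs : α} {σ : List α}

section core2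
variable (hcs : cs ∈ C) (hσn : σ.Nodup) (hσF : σ.toFinset = C)
include hcs hσn hσF

theorem restrict_gather_disj {l : List α} (hl : l.Nodup) (hcl : cs ∈ l)
    (hD : ∀ x ∈ D, x ∉ C) : restrict (gather C cs σ l) D = restrict l D := by
  obtain ⟨a, b, rfl, ha, hb⟩ := exists_split hl hcl
  rw [gather_split hcs ha hb, restrict, restrict]
  rw [List.filter_append, List.filter_append, List.filter_append, List.filter_cons]
  have hcsD : (decide (cs ∈ D) = true) = False := by
    simp only [decide_eq_true_eq, eq_iff_iff, iff_false]
    exact fun h => hD cs h hcs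
  have hσnil : σ.filter (fun x => decide (x ∈ D)) = [] := by
    rw [List.filter_eq_nil_iff]
    intro x hx
    simp only [decide_eq_true_eq]
    intro hxD
    exact hD x hxD ((mem_sigma_iff hcs hσn hσF).1 hx)
  have hcomm : ∀ t : List α,
      (t.filter (fun y => decide (y ∉ C))).filter (fun x => decide (x ∈ D)) =
        t.filter (fun x => decide (x ∈ D)) := by
    intro t
    rw [List.filter_filter]
    apply List.filter_congr
    intro x _
    by_cases hxD : x ∈ D
    · simp [hxD, hD x hxD]
    · simp [hxD]
  rw [hσnil, hcomm, hcomm]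
  simp [hcsD]

theorem restrict_gather_subset {l : List α} (hl : l.Nodup) (hcl : cs ∈ l)
    (hD : ∀ x ∈ D, x ∈ C) : restrict (gather C cs σ l) D = restrict σ D := by
  obtain ⟨a, b, rfl, ha, hb⟩ := exists_split hl hcl
  rw [gather_split hcs ha hb, restrict, restrict]
  rw [List.filter_append, List.filter_append]
  have hnil : ∀ t : List α,
      (t.filter (fun y => decide (y ∉ C))).filter (fun x => decide (x ∈ D)) = [] := by
    intro t
    rw [List.filter_eq_nil_iff]
    intro x hx
    simp only [decide_eq_true_eq]
    intro hxD
    exact (mem_nc_filter.1 hx).2 (hD x hxD)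
  rw [hnil, hnil]
  simp

theorem restrict_gather_self {l : List α} (hl : l.Nodup) (hcl : cs ∈ l) :
    restrict (gather C cs σ l) C = σ := by
  have h := restrict_gather_subset hcs hσn hσF hl hcl (D := C) (fun x hx => hx)
  rw [h, restrict, List.filter_eq_self]
  intro x hx
  simp only [decide_eq_true_eq]
  exact (mem_sigma_iff hcs hσn hσF).1 hx

theorem restrict_gather_superset {l : List α} (hl : l.Nodup) (hcl : cs ∈ l)
    (hD : ∀ x ∈ C, x ∈ D) : restrict (gather C cs σ l) D = gather C cs σ (restrict l D) := by
  obtain ⟨a, b, rfl, ha, hb⟩ := exists_split hl hcl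
  have hra : cs ∉ a.filter (fun x => decide (x ∈ D)) := fun h => ha (List.mem_of_mem_filter h)
  have hrb : cs ∉ b.filter (fun x => decide (x ∈ D)) := fun h => hb (List.mem_of_mem_filter h)
  rw [gather_split hcs ha hb]
  have hrl : restrict (a ++ cs :: b) D =
      a.filter (fun x => decide (x ∈ D)) ++ cs :: b.filter (fun x => decide (x ∈ D)) := by
    rw [restrict, List.filter_append, List.filter_cons]
    have : decide (cs ∈ D) = true := by simp [hD cs hcs]
    simp [this]
  rw [hrl, gather_split hcs hra hrb]
  rw [restrict, List.filter_append, List.filter_append]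
  have hσD : σ.filter (fun x => decide (x ∈ D)) = σ := by
    rw [List.filter_eq_self]
    intro x hx
    simp only [decide_eq_true_eq]
    exact hD x ((mem_sigma_iff hcs hσn hσF).1 hx)
  have hcomm : ∀ t : List α,
      (t.filter (fun y => decide (y ∉ C))).filter (fun x => decide (x ∈ D)) =
        (t.filter (fun x => decide (x ∈ D))).filter (fun y => decide (y ∉ C)) := by
    intro t
    rw [List.filter_filter, List.filter_filter]
    apply List.filter_congr
    intro x _
    rw [Bool.and_comm]
  rw [hσD, hcomm, hcomm]

theorem gather_fix {a b : List α} (hA : ∀ x ∈ a, x ∉ C) (hB : ∀ x ∈ b, x ∉ C) :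
    gather C cs σ (a ++ σ ++ b) = a ++ σ ++ b := by
  rw [gather_append, gather_append]
  rw [gather_of_not_mem hcs hA, gather_of_not_mem hcs hB]
  have hcσ : cs ∈ σ := (mem_sigma_iff hcs hσn hσF).2 hcs
  obtain ⟨u, v, huv, hu, hv⟩ := exists_split hσn hcσ
  have hgs : gather C cs σ σ = σ := by
    conv_lhs => rw [huv]
    rw [gather_split hcs hu hv]
    have hun : u.filter (fun x => decide (x ∉ C)) = [] := by
      rw [List.filter_eq_nil_iff]
      intro x hx
      simp only [decide_eq_true_eq, not_not]
      exact (mem_sigma_iff hcs hσn hσF).1 (by rw [huv]; simp [hx])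
    have hvn : v.filter (fun x => decide (x ∉ C)) = [] := by
      rw [List.filter_eq_nil_iff]
      intro x hx
      simp only [decide_eq_true_eq, not_not]
      exact (mem_sigma_iff hcs hσn hσF).1 (by rw [huv]; simp [hx])
    rw [hun, hvn]
    simp [huv.symm]
  rw [hgs]

end core2
end SLAux

namespace SLAux
variable {α : Type*} [DecidableEq α]
variable {C : Finset α} {cs : α} {σ : List α}

section befg
variable (hcs : cs ∈ C) (hσn : σ.Nodup) (hσF : σ.toFinset = C)
include hcs hσn hσF

theorem bef_gather_out_out {l : List α} (hl : l.Nodup) (hcl : cs ∈ l)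
    {x y : α} (hx : x ∉ C) (hy : y ∉ C) :
    Bef (gather C cs σ l) x y ↔ Bef l x y := by
  obtain ⟨a, b, rfl, ha, hb⟩ := exists_split hl hcl
  rw [gather_split hcs ha hb]
  set fa := a.filter (fun z => decide (z ∉ C)) with hfa
  set fb := b.filter (fun z => decide (z ∉ C)) with hfb
  have hxσ : x ∉ σ := fun h => hx ((mem_sigma_iff hcs hσn hσF).1 h)
  have hyσ : y ∉ σ := fun h => hy ((mem_sigma_iff hcs hσn hσF).1 h)
  have hfam : ∀ z, z ∉ C → (z ∈ fa ↔ z ∈ a) := by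
    intro z hz; rw [hfa, mem_nc_filter]; exact ⟨fun h => h.1, fun h => ⟨h, hz⟩⟩
  have hfbm : ∀ z, z ∉ C → (z ∈ fb ↔ z ∈ b) := by
    intro z hz; rw [hfb, mem_nc_filter]; exact ⟨fun h => h.1, fun h => ⟨h, hz⟩⟩
  have hbefa : Bef fa x y ↔ Bef a x y := bef_filter_iff (by simp [hx]) (by simp [hy])
  have hbefb : Bef fb x y ↔ Bef b x y := bef_filter_iff (by simp [hx]) (by simp [hy])
  constructor
  · intro h
    rcases bef_append_elim h with h1 | h1 | ⟨h1, h2⟩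
    · rcases bef_append_elim h1 with h2 | h2 | ⟨h2, h3⟩
      · exact (hbefa.1 h2).mono (List.sublist_append_left a (cs :: b))
      · exact absurd h2.mem_left hxσ
      · exact absurd h3 hyσ
    · exact (hbefb.1 h1).mono ((List.sublist_cons_self cs b).trans
        (List.sublist_append_right a (cs :: b)))
    · rcases List.mem_append.1 h1 with h3 | h3
      · exact bef_append_cross ((hfam x hx).1 h3)
          (List.mem_cons_of_mem cs ((hfbm y hy).1 h2)) h.1
      · exact absurd h3 hxσ
  · intro h
    rcases bef_append_elim h with h1 | h1 | ⟨h1, h2⟩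
    · exact bef_append_left (bef_append_left (hbefa.2 h1))
    · rcases bef_cons_elim h1 with h2 | ⟨h2, h3⟩
      · exact bef_append_right (hbefb.2 h2)
      · exact absurd (h2 ▸ hcs) hx
    · have hyb : y ∈ b := by
        rcases List.mem_cons.1 h2 with h3 | h3
        · exact absurd (h3 ▸ hcs) hy
        · exact h3
      exact bef_append_cross (List.mem_append.2 (Or.inl ((hfam x hx).2 h1)))
        ((hfbm y hy).2 hyb) h.1

theorem bef_gather_in_in {l : List α} (hl : l.Nodup) (hcl : cs ∈ l)
    {c c' : α} (hc : c ∈ C) (hc' : c' ∈ C) :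
    Bef (gather C cs σ l) c c' ↔ Bef σ c c' := by
  obtain ⟨a, b, rfl, ha, hb⟩ := exists_split hl hcl
  rw [gather_split hcs ha hb]
  have hnfa : ∀ z, z ∈ C → z ∉ a.filter (fun w => decide (w ∉ C)) := by
    intro z hz h; exact (mem_nc_filter.1 h).2 hz
  have hnfb : ∀ z, z ∈ C → z ∉ b.filter (fun w => decide (w ∉ C)) := by
    intro z hz h; exact (mem_nc_filter.1 h).2 hz
  constructor
  · intro h
    rcases bef_append_elim h with h1 | h1 | ⟨h1, h2⟩
    · rcases bef_append_elim h1 with h2 | h2 | ⟨h2, h3⟩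
      · exact absurd h2.mem_left (hnfa c hc)
      · exact h2
      · exact absurd h2 (hnfa c hc)
    · exact absurd h1.mem_left (hnfb c hc)
    · exact absurd h2 (hnfb c' hc')
  · intro h
    exact bef_append_left (bef_append_right h)

theorem bef_gather_in_out {l : List α} (hl : l.Nodup) (hcl : cs ∈ l)
    {c x : α} (hc : c ∈ C) (hx : x ∉ C) :
    (Bef (gather C cs σ l) c x ↔ Bef l cs x) ∧ (Bef (gather C cs σ l) x c ↔ Bef l x cs) := by
  obtain ⟨a, b, rfl, ha, hb⟩ := exists_split hl hcl
  rw [gather_split hcs ha hb]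
  set fa := a.filter (fun z => decide (z ∉ C)) with hfa
  set fb := b.filter (fun z => decide (z ∉ C)) with hfb
  have hxσ : x ∉ σ := fun h => hx ((mem_sigma_iff hcs hσn hσF).1 h)
  have hcσ : c ∈ σ := (mem_sigma_iff hcs hσn hσF).2 hc
  have hnfa : ∀ z, z ∈ C → z ∉ fa := fun z hz h => (mem_nc_filter.1 h).2 hz
  have hnfb : ∀ z, z ∈ C → z ∉ fb := fun z hz h => (mem_nc_filter.1 h).2 hz
  have hcx : c ≠ x := fun h => hx (h ▸ hc)
  have hcsx : cs ≠ x := fun h => hx (h ▸ hcs)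
  have hfam : ∀ z, z ∉ C → (z ∈ fa ↔ z ∈ a) := by
    intro z hz; rw [hfa, mem_nc_filter]; exact ⟨fun h => h.1, fun h => ⟨h, hz⟩⟩
  have hfbm : ∀ z, z ∉ C → (z ∈ fb ↔ z ∈ b) := by
    intro z hz; rw [hfb, mem_nc_filter]; exact ⟨fun h => h.1, fun h => ⟨h, hz⟩⟩
  constructor
  · constructor
    · intro h
      rcases bef_append_elim h with h1 | h1 | ⟨h1, h2⟩
      · rcases bef_append_elim h1 with h2 | h2 | ⟨h2, h3⟩
        · exact absurd h2.mem_left (hnfa c hc)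
        · exact absurd h2.mem_right hxσ
        · exact absurd h2 (hnfa c hc)
      · exact absurd h1.mem_left (hnfb c hc)
      · -- x ∈ fb hence x ∈ b
        have hxb : x ∈ b := (hfbm x hx).1 h2
        rw [List.append_cons a cs b]
        exact bef_append_cross (by simp) hxb hcsx
    · intro h
      have hxb : x ∈ b := by
        rcases bef_append_elim h with h1 | h1 | ⟨h1, h2⟩
        · exact absurd h1.mem_left ha
        · rcases bef_cons_elim h1 with h2 | ⟨h2, h3⟩
          · exact absurd h2.mem_left hb
          · exact h3
        · exact absurd h1 ha
      exact bef_append_cross (List.mem_append.2 (Or.inr hcσ)) ((hfbm x hx).2 hxb) hcx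
  · constructor
    · intro h
      rcases bef_append_elim h with h1 | h1 | ⟨h1, h2⟩
      · rcases bef_append_elim h1 with h2 | h2 | ⟨h2, h3⟩
        · exact absurd h2.mem_right (hnfa c hc)
        · exact absurd h2.mem_left hxσ
        · -- x ∈ fa hence x ∈ a
          have hxa : x ∈ a := (hfam x hx).1 h2
          exact bef_append_cross hxa (List.mem_cons_self : cs ∈ cs :: b) (Ne.symm hcsx)
      · exact absurd h1.mem_right (hnfb c hc)
      · exact absurd h2 (hnfb c hc)
    · intro h
      have hxa : x ∈ a := by
        rcases bef_append_elim h with h1 | h1 | ⟨h1, h2⟩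
        · exact absurd h1.mem_right ha
        · rcases bef_cons_elim h1 with h2 | ⟨h2, h3⟩
          · exact absurd h2.mem_right hb
          · exact absurd h2 (Ne.symm hcsx)
        · exact h1
      exact bef_append_left (bef_append_cross ((hfam x hx).2 hxa) hcσ (Ne.symm hcx))

end befg
end SLAux


namespace SLAux
variable {α : Type*} [DecidableEq α]

instance (l : List α) (u v : α) : Decidable (Bef l u v) := by
  unfold Bef; infer_instance

theorem exists_flip {s : ℕ → Prop} {a b : ℕ} (hab : a ≤ b) (h : ¬ (s a ↔ s b)) :
    ∃ k, a ≤ k ∧ k < b ∧ ¬ (s k ↔ s (k + 1)) := by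
  induction b, hab using Nat.le_induction with
  | base => exact absurd Iff.rfl h
  | succ b hab ih =>
    by_cases h' : s a ↔ s b
    · exact ⟨b, hab, Nat.lt_succ_self b, fun hh => h (h'.trans hh)⟩
    · obtain ⟨k, h1, h2, h3⟩ := ih h'
      exact ⟨k, h1, h2.trans (Nat.lt_succ_self b), h3⟩

theorem restrict_toFinset {l : List α} {D : Finset α} (hD : D ⊆ l.toFinset) :
    (restrict l D).toFinset = D := by
  rw [restrict, List.toFinset_filter]
  ext x
  simp only [Finset.mem_filter, List.mem_toFinset, decide_eq_true_eq]
  exact ⟨fun h => h.2, fun h => ⟨List.mem_toFinset.1 (hD h), h⟩⟩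

/-- pair indicator -/
def indA (l l' : List α) (D : Finset α) (p : α × α) : ℕ :=
  if p.1 ∈ D ∧ p.2 ∈ D ∧ Bef l p.1 p.2 ∧ Bef l' p.2 p.1 then 1 else 0

theorem inv_restrict_eq_sum {T : Finset α} {l l' : List α} (hl : l.Nodup) (hl' : l'.Nodup)
    {D : Finset α} (hDl : D ⊆ l.toFinset) (hDl' : D ⊆ l'.toFinset) (hDT : D ⊆ T) :
    inv (restrict l D) (restrict l' D) = ∑ p ∈ T ×ˢ T, indA l l' D p := by
  rw [inv]
  rw [restrict_toFinset hDl]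
  rw [Finset.card_filter]
  rw [← Finset.sum_subset (Finset.product_subset_product hDT hDT)]
  · apply Finset.sum_congr rfl
    intro p hp
    obtain ⟨hp1, hp2⟩ := Finset.mem_product.1 hp
    have h1 : p.1 ∈ restrict l D := by
      rw [← List.mem_toFinset, restrict_toFinset hDl]; exact hp1
    have h2 : p.2 ∈ restrict l D := by
      rw [← List.mem_toFinset, restrict_toFinset hDl]; exact hp2
    have h1' : p.1 ∈ restrict l' D := by
      rw [← List.mem_toFinset, restrict_toFinset hDl']; exact hp1
    have h2' : p.2 ∈ restrict l' D := by
      rw [← List.mem_toFinset, restrict_toFinset hDl']; exact hp2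
    have hrn : (restrict l D).Nodup := hl.filter _
    have hrn' : (restrict l' D).Nodup := hl'.filter _
    have e1 : (restrict l D).idxOf p.1 < (restrict l D).idxOf p.2 ↔ Bef l p.1 p.2 := by
      rw [indexOf_lt_iff_bef hrn h1 h2, restrict]
      exact bef_filter_iff (by simp [hp1]) (by simp [hp2])
    have e2 : (restrict l' D).idxOf p.2 < (restrict l' D).idxOf p.1 ↔ Bef l' p.2 p.1 := by
      rw [indexOf_lt_iff_bef hrn' h2' h1', restrict]
      exact bef_filter_iff (by simp [hp2]) (by simp [hp1])
    rw [indA]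
    by_cases hb : Bef l p.1 p.2 ∧ Bef l' p.2 p.1
    · rw [if_pos ⟨e1.2 hb.1, e2.2 hb.2⟩, if_pos ⟨hp1, hp2, hb⟩]
    · rw [if_neg, if_neg (by tauto)]
      intro hcon
      exact hb ⟨e1.1 hcon.1, e2.1 hcon.2⟩
  · intro p _ hp
    rw [indA, if_neg]
    intro hcon
    exact hp (Finset.mem_product.2 ⟨hcon.1, hcon.2.1⟩)

end SLAux

namespace SLAux
variable {α : Type*} [DecidableEq α]

def Quiet (P : SLInstance α) (C : Finset α) (i j : ℕ) : Prop :=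
  ∀ k, i < k → k < j →
    ((∀ p ∈ P.inters, p.1 = k → Disjoint p.2 C) ∨ ∃ p ∈ P.inters, p.1 = k ∧ C ⊆ p.2)

def BlockIn (m l : List α) : Prop := ∃ a b, l = a ++ m ++ b

def HypT (P : SLInstance α) (t : ℕ × ℕ × Finset α × ℕ) : Prop :=
  (t.1, t.2.2.1) ∈ P.inters ∧ (t.2.1, t.2.2.1) ∈ P.inters ∧ t.1 < t.2.1 ∧
    Quiet P t.2.2.1 t.1 t.2.1 ∧ t.1 < t.2.2.2 ∧ t.2.2.2 < t.2.1

def GoodT {P : SLInstance α} (S : SLSolution P) (t : ℕ × ℕ × Finset α × ℕ) : Prop :=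
  BlockIn (restrict (S.ord t.1) t.2.2.1) (S.ord t.2.2.2)

def DomT (P : SLInstance α) : Finset (ℕ × ℕ × Finset α × ℕ) :=
  (Finset.range P.len) ×ˢ ((Finset.range P.len) ×ˢ ((P.inters.image Prod.snd) ×ˢ (Finset.range P.len)))

open Classical in
noncomputable def Bad (P : SLInstance α) (S : SLSolution P) : Finset (ℕ × ℕ × Finset α × ℕ) :=
  (DomT P).filter (fun t => HypT P t ∧ ¬ GoodT S t)

theorem mem_bad {P : SLInstance α} {S : SLSolution P} {t : ℕ × ℕ × Finset α × ℕ} :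
    t ∈ Bad P S ↔ t ∈ DomT P ∧ HypT P t ∧ ¬ GoodT S t := by
  classical
  rw [Bad, Finset.mem_filter]

theorem hypT_mem_dom {P : SLInstance α} {t : ℕ × ℕ × Finset α × ℕ} (h : HypT P t) :
    t ∈ DomT P := by
  obtain ⟨i, j, C, k⟩ := t
  obtain ⟨h1, h2, h3, _, h5, h6⟩ := h
  have hi : i < P.len := (P.valid _ h1).1
  have hj : j < P.len := (P.valid _ h2).1
  simp only [DomT, Finset.mem_product, Finset.mem_range, Finset.mem_image]
  exact ⟨hi, hj, ⟨(i, C), h1, rfl⟩, lt_trans h6 hj⟩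

/-- if two non-disjoint interactions occur at the same time they are equal -/
theorem eq_of_not_disjoint {P : SLInstance α} {k : ℕ} {E F : Finset α}
    (hE : (k, E) ∈ P.inters) (hF : (k, F) ∈ P.inters) (h : ¬ Disjoint E F) : E = F := by
  by_contra hne
  exact h (P.disj _ hE _ hF rfl (by simp [hne]))

/-- an interaction inside a quiet window either avoids `C` or contains it -/
theorem quiet_subset {P : SLInstance α} {C E : Finset α} {i j k : ℕ}
    (hq : Quiet P C i j) (hik : i < k) (hkj : k < j) (hE : (k, E) ∈ P.inters)
    (hnd : ¬ Disjoint E C) : C ⊆ E := by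
  rcases hq k hik hkj with h | ⟨p, hp, hpk, hpC⟩
  · exact absurd (h _ hE rfl) hnd
  · obtain ⟨p1, p2⟩ := p
    cases hpk
    have : p2 = E := by
      apply eq_of_not_disjoint hp hE
      intro hd
      exact hnd (Finset.disjoint_left.2 fun {x} hxE hxC =>
        (Finset.disjoint_left.1 hd) (hpC hxC) hxE) |>.elim
    exact this ▸ hpC

end SLAux

namespace SLAux
variable {α : Type*} [DecidableEq α]

/-- context for the local fix of a quiet window `[I, J]` for character set `C`,
gathering `C` at the position of `cs`. -/
structure FixCtx (P : SLInstance α) (S : SLSolution P) (C : Finset α) (I J : ℕ) (cs : α) :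
    Prop where
  hIJ : I < J
  hI : (I, C) ∈ P.inters
  hJ : (J, C) ∈ P.inters
  hq : Quiet P C I J
  hcs : cs ∈ C

variable {P : SLInstance α} {S : SLSolution P} {C : Finset α} {I J : ℕ} {cs : α}

namespace FixCtx

theorem activeC (ctx : FixCtx P S C I J cs) : ∀ k, I ≤ k → k ≤ J → C ⊆ P.AC k := by
  intro k h1 h2 c hc
  exact P.consecA c I k J h1 h2 ((P.valid _ ctx.hI).2 hc) ((P.valid _ ctx.hJ).2 hc)

theorem sig_nodup (ctx : FixCtx P S C I J cs) : (restrict (S.ord I) C).Nodup :=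
  (S.nodup I).filter _

theorem sig_toFinset (ctx : FixCtx P S C I J cs) : (restrict (S.ord I) C).toFinset = C := by
  apply restrict_toFinset
  rw [S.perm I]
  exact ctx.activeC I le_rfl (le_of_lt ctx.hIJ)

theorem csmem (ctx : FixCtx P S C I J cs) {k : ℕ} (h1 : I ≤ k) (h2 : k ≤ J) :
    cs ∈ S.ord k := by
  rw [← List.mem_toFinset, S.perm k]
  exact ctx.activeC k h1 h2 ctx.hcs

end FixCtx

/-- the modified family of orders -/
noncomputable def newOrd (P : SLInstance α) (S : SLSolution P) (C : Finset α) (I J : ℕ)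
    (cs : α) (k : ℕ) : List α :=
  if I < k ∧ k < J then gather C cs (restrict (S.ord I) C) (S.ord k) else S.ord k

theorem newOrd_eq (h : ¬ (I < k ∧ k < J)) : newOrd P S C I J cs k = S.ord k :=
  if_neg h

theorem newOrd_eq_gather (h : I < k ∧ k < J) :
    newOrd P S C I J cs k = gather C cs (restrict (S.ord I) C) (S.ord k) := if_pos h

theorem FixCtx.newOrd_nodup (ctx : FixCtx P S C I J cs) (k : ℕ) :
    (newOrd P S C I J cs k).Nodup := by
  rw [newOrd]
  split
  · next h =>
    exact gather_nodup ctx.hcs ctx.sig_nodup ctx.sig_toFinset (S.nodup k)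
      (ctx.csmem (le_of_lt h.1) (le_of_lt h.2))
  · exact S.nodup k

theorem FixCtx.newOrd_toFinset (ctx : FixCtx P S C I J cs) (k : ℕ) :
    (newOrd P S C I J cs k).toFinset = P.AC k := by
  rw [newOrd]
  split
  · next h =>
    rw [gather_toFinset ctx.hcs ctx.sig_nodup ctx.sig_toFinset (S.nodup k)
      (ctx.csmem (le_of_lt h.1) (le_of_lt h.2)), S.perm k]
    · rw [S.perm k]
      exact ctx.activeC k (le_of_lt h.1) (le_of_lt h.2)
  · exact S.perm k

theorem FixCtx.newOrd_consec (ctx : FixCtx P S C I J cs) :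
    ∀ p ∈ P.inters, ConsecutiveIn p.2 (newOrd P S C I J cs p.1) := by
  rintro ⟨k, E⟩ hkE
  by_cases hint : I < k ∧ k < J
  · rw [newOrd_eq_gather hint]
    obtain ⟨p, m, s, hsplit, hmF⟩ := S.consec _ hkE
    have hmE : ∀ x ∈ m, x ∈ E := by
      intro x hx
      have := List.mem_toFinset.2 hx
      rw [hmF] at this
      exact this
    by_cases hd : Disjoint E C
    · have hm' : ∀ x ∈ m, x ∉ C := fun x hx => Finset.disjoint_left.1 hd (hmE x hx)
      refine ⟨gather C cs (restrict (S.ord I) C) p, m, gather C cs (restrict (S.ord I) C) s, ?_, hmF⟩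
      rw [hsplit, gather_append, gather_append, gather_of_not_mem ctx.hcs hm']
    · have hCE : C ⊆ E := quiet_subset ctx.hq hint.1 hint.2 hkE hd
      have hnodup := S.nodup k
      rw [hsplit] at hnodup
      have hCm : ∀ x ∈ C, x ∈ m := by
        intro x hxC
        rw [← List.mem_toFinset, hmF]
        exact hCE hxC
      have hpm : ∀ x ∈ p, x ∉ C := by
        intro x hx hxC
        rw [List.append_assoc, List.nodup_append'] at hnodup
        exact hnodup.2.2 hx (List.mem_append.2 (Or.inl (hCm x hxC)))
      have hsm : ∀ x ∈ s, x ∉ C := by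
        intro x hx hxC
        rw [List.nodup_append'] at hnodup
        exact hnodup.2.2 (List.mem_append.2 (Or.inr (hCm x hxC))) hx
      have hcsm : cs ∈ m := hCm cs ctx.hcs
      have hmnodup : m.Nodup := by
        rw [List.nodup_append, List.nodup_append] at hnodup
        exact hnodup.1.2.1
      refine ⟨p, gather C cs (restrict (S.ord I) C) m, s, ?_, ?_⟩
      · rw [hsplit, gather_append, gather_append, gather_of_not_mem ctx.hcs hpm,
          gather_of_not_mem ctx.hcs hsm]
      · rw [gather_toFinset ctx.hcs ctx.sig_nodup ctx.sig_toFinset hmnodup hcsm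
          (fun x hx => List.mem_toFinset.2 (hCm x hx)), hmF]
  · rw [newOrd_eq hint]
    exact S.consec _ hkE

/-- the modified solution -/
noncomputable def newSol (ctx : FixCtx P S C I J cs) : SLSolution P where
  ord := newOrd P S C I J cs
  nodup := ctx.newOrd_nodup
  perm := ctx.newOrd_toFinset
  consec := ctx.newOrd_consec

end SLAux

namespace SLAux
variable {α : Type*} [DecidableEq α]
variable {P : SLInstance α} {S : SLSolution P} {C : Finset α} {I J : ℕ} {cs : α}

theorem bef_not_iff {l : List α} (hl : l.Nodup) {u v : α} (hu : u ∈ l) (hv : v ∈ l)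
    (huv : u ≠ v) : Bef l v u ↔ ¬ Bef l u v := by
  constructor
  · intro h h'
    exact bef_asymm hl h' h
  · intro h
    exact (bef_total hl hu hv huv).resolve_left h

theorem indA_diag {l l' : List α} {D : Finset α} {u : α} : indA l l' D (u, u) = 0 := by
  rw [indA, if_neg]
  rintro ⟨-, -, h, -⟩
  exact h.1 rfl

theorem indA_pair_flip {l l' : List α} (hl : l.Nodup) (hl' : l'.Nodup) {D : Finset α} {u v : α}
    (hu : u ∈ D) (hv : v ∈ D) (hul : u ∈ l) (hvl : v ∈ l) (hul' : u ∈ l') (hvl' : v ∈ l')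
    (huv : u ≠ v) :
    indA l l' D (u, v) + indA l l' D (v, u) = if Bef l u v ↔ Bef l' u v then 0 else 1 := by
  have e1 := bef_not_iff hl hul hvl huv
  have e1' := bef_not_iff hl' hul' hvl' huv
  by_cases A : Bef l u v <;> by_cases B : Bef l' u v <;>
    simp [indA, A, B, e1, e1', hu, hv]

/-- the active window -/
def Tw (P : SLInstance α) (I J : ℕ) : Finset α := (Finset.Icc I J).biUnion P.AC

theorem D_subset_Tw {k : ℕ} (h1 : I ≤ k) (h2 : k < J) :
    P.AC k ∩ P.AC (k + 1) ⊆ Tw P I J := by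
  intro x hx
  rw [Tw, Finset.mem_biUnion]
  exact ⟨k, Finset.mem_Icc.2 ⟨h1, le_of_lt h2⟩, (Finset.mem_inter.1 hx).1⟩

/-- per-step pair indicator for a solution -/
noncomputable def stepInd (P : SLInstance α) (S : SLSolution P) (k : ℕ) (p : α × α) : ℕ :=
  indA (S.ord k) (S.ord (k + 1)) (P.AC k ∩ P.AC (k + 1)) p

theorem stepInd_bridge (S₁ : SLSolution P) {k : ℕ} (h1 : I ≤ k) (h2 : k < J) :
    inv (restrict (S₁.ord k) (P.AC k ∩ P.AC (k + 1)))
        (restrict (S₁.ord (k + 1)) (P.AC k ∩ P.AC (k + 1))) =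
      ∑ p ∈ Tw P I J ×ˢ Tw P I J, stepInd P S₁ k p := by
  apply inv_restrict_eq_sum (S₁.nodup k) (S₁.nodup (k + 1))
  · rw [S₁.perm k]; exact Finset.inter_subset_left
  · rw [S₁.perm (k + 1)]; exact Finset.inter_subset_right
  · exact D_subset_Tw h1 h2

/-- reduce the crossing comparison to the window -/
theorem crS_le_of_window (S₁ S₂ : SLSolution P) (hJ : J < P.len)
    (heq : ∀ k, ¬ (I < k ∧ k < J) → S₁.ord k = S₂.ord k)
    (hwin : ∑ k ∈ Finset.Ico I J, ∑ p ∈ Tw P I J ×ˢ Tw P I J, stepInd P S₁ k p ≤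
            ∑ k ∈ Finset.Ico I J, ∑ p ∈ Tw P I J ×ˢ Tw P I J, stepInd P S₂ k p) :
    crS P S₁ ≤ crS P S₂ := by
  have hsub : Finset.Ico I J ⊆ Finset.range (P.len - 1) := by
    intro k hk
    rw [Finset.mem_Ico] at hk
    rw [Finset.mem_range]
    omega
  rw [crS, crS, ← Finset.sum_sdiff hsub, ← Finset.sum_sdiff hsub]
  apply Nat.add_le_add
  · apply le_of_eq
    apply Finset.sum_congr rfl
    intro k hk
    rw [Finset.mem_sdiff, Finset.mem_Ico] at hk
    have h1 : S₁.ord k = S₂.ord k := heq k (by omega)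
    have h2 : S₁.ord (k + 1) = S₂.ord (k + 1) := heq (k + 1) (by omega)
    rw [h1, h2]
  · calc ∑ k ∈ Finset.Ico I J,
        inv (restrict (S₁.ord k) (P.AC k ∩ P.AC (k + 1)))
            (restrict (S₁.ord (k + 1)) (P.AC k ∩ P.AC (k + 1)))
        = ∑ k ∈ Finset.Ico I J, ∑ p ∈ Tw P I J ×ˢ Tw P I J, stepInd P S₁ k p := by
          apply Finset.sum_congr rfl
          intro k hk
          rw [Finset.mem_Ico] at hk
          exact stepInd_bridge S₁ hk.1 hk.2
      _ ≤ ∑ k ∈ Finset.Ico I J, ∑ p ∈ Tw P I J ×ˢ Tw P I J, stepInd P S₂ k p := hwin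
      _ = _ := by
          apply Finset.sum_congr rfl
          intro k hk
          rw [Finset.mem_Ico] at hk
          exact (stepInd_bridge S₂ hk.1 hk.2).symm

end SLAux

namespace SLAux
variable {α : Type*} [DecidableEq α]
variable {P : SLInstance α} {S : SLSolution P} {C : Finset α} {I J : ℕ} {cs : α}

namespace FixCtx

theorem bef_new_in (ctx : FixCtx P S C I J cs) {k : ℕ} (h1 : I ≤ k) (h2 : k < J)
    {c c' : α} (hc : c ∈ C) (hc' : c' ∈ C) :
    Bef (newOrd P S C I J cs k) c c' ↔ Bef (S.ord I) c c' := by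
  rcases eq_or_lt_of_le h1 with rfl | hlt
  · rw [newOrd_eq (by omega)]
  · rw [newOrd_eq_gather ⟨hlt, h2⟩]
    rw [bef_gather_in_in ctx.hcs ctx.sig_nodup ctx.sig_toFinset (S.nodup k)
      (ctx.csmem (le_of_lt hlt) (le_of_lt h2)) hc hc']
    rw [restrict]
    exact bef_filter_iff (by simp [hc]) (by simp [hc'])

theorem bef_new_out (ctx : FixCtx P S C I J cs) {k : ℕ}
    {x y : α} (hx : x ∉ C) (hy : y ∉ C) :
    Bef (newOrd P S C I J cs k) x y ↔ Bef (S.ord k) x y := by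
  by_cases h : I < k ∧ k < J
  · rw [newOrd_eq_gather h]
    exact bef_gather_out_out ctx.hcs ctx.sig_nodup ctx.sig_toFinset (S.nodup k)
      (ctx.csmem (le_of_lt h.1) (le_of_lt h.2)) hx hy
  · rw [newOrd_eq h]

theorem bef_new_mixed (ctx : FixCtx P S C I J cs) {k : ℕ} (h1 : I ≤ k) (h2 : k ≤ J)
    {c x : α} (hc : c ∈ C) (hx : x ∉ C) (hxl : x ∈ S.ord k) :
    (Bef (newOrd P S C I J cs k) c x ↔ Bef (S.ord k) cs x) ∧
      (Bef (newOrd P S C I J cs k) x c ↔ Bef (S.ord k) x cs) := by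
  by_cases h : I < k ∧ k < J
  · rw [newOrd_eq_gather h]
    exact bef_gather_in_out ctx.hcs ctx.sig_nodup ctx.sig_toFinset (S.nodup k)
      (ctx.csmem (le_of_lt h.1) (le_of_lt h.2)) hc hx
  · rw [newOrd_eq h]
    have hkIJ : k = I ∨ k = J := by omega
    have hblock : ConsecutiveIn C (S.ord k) := by
      rcases hkIJ with rfl | rfl
      · exact S.consec _ ctx.hI
      · exact S.consec _ ctx.hJ
    obtain ⟨p, m, s, hsplit, hmF⟩ := hblock
    have hm : ∀ y, y ∈ m ↔ y ∈ C := by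
      intro y
      rw [← hmF, List.mem_toFinset]
    exact bef_block (S.nodup k) hsplit hm hc ctx.hcs hx hxl

end FixCtx
end SLAux

namespace SLAux
variable {α : Type*} [DecidableEq α]
variable {P : SLInstance α} {S : SLSolution P} {C : Finset α} {I J : ℕ} {cs : α}

/-- total number of disagreements of the ordered pair `(u,v)` over the window -/
noncomputable def Ffun (P : SLInstance α) (S : SLSolution P) (I J : ℕ) (u v : α) : ℕ :=
  ∑ k ∈ Finset.Ico I J, stepInd P S k (u, v)

/-- weight of a character: crossings with outside characters over the window -/
noncomputable def Wt (P : SLInstance α) (S : SLSolution P) (C : Finset α) (I J : ℕ)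
    (c : α) : ℕ :=
  ∑ x ∈ Tw P I J \ C, (Ffun P S I J c x + Ffun P S I J x c)

theorem FixCtx.crS_newSol_le (ctx : FixCtx P S C I J cs)
    (hmin : ∀ c ∈ C, Wt P S C I J cs ≤ Wt P S C I J c) :
    crS P (newSol ctx) ≤ crS P S := by
  classical
  have hIJ' : I < J := ctx.hIJ
  apply crS_le_of_window _ _ (P.valid _ ctx.hJ).1 (fun k h => newOrd_eq h)
  have hordS' : ∀ k, (newSol ctx).ord k = newOrd P S C I J cs k := fun _ => rfl
  set T : Finset α := Tw P I J with hT
  set D : ℕ → Finset α := fun k => P.AC k ∩ P.AC (k + 1) with hD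
  set f' : ℕ → α × α → ℕ :=
    fun k p => indA (newOrd P S C I J cs k) (newOrd P S C I J cs (k + 1)) (D k) p with hf'
  set f : ℕ → α × α → ℕ := fun k p => indA (S.ord k) (S.ord (k + 1)) (D k) p with hf
  have hGF : ∀ u v, (∑ k ∈ Finset.Ico I J, f k (u, v)) = Ffun P S I J u v := fun u v => rfl
  -- membership helpers
  have hCT : C ⊆ T := by
    intro c hc
    rw [hT, Tw, Finset.mem_biUnion]
    exact ⟨I, Finset.mem_Icc.2 ⟨le_rfl, le_of_lt ctx.hIJ⟩, (P.valid _ ctx.hI).2 hc⟩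
  have hCD : ∀ {k}, I ≤ k → k < J → ∀ {a}, a ∈ C → a ∈ D k := by
    intro k h1 h2 a ha
    exact Finset.mem_inter.2 ⟨ctx.activeC k h1 (by omega) ha,
      ctx.activeC (k + 1) (by omega) (by omega) ha⟩
  have hSord : ∀ {k}, I ≤ k → k ≤ J → ∀ {a}, a ∈ C → a ∈ S.ord k := by
    intro k h1 h2 a ha
    rw [← List.mem_toFinset, S.perm]
    exact ctx.activeC _ h1 h2 ha
  have hNord : ∀ {k}, I ≤ k → k ≤ J → ∀ {a}, a ∈ C → a ∈ newOrd P S C I J cs k := by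
    intro k h1 h2 a ha
    rw [← List.mem_toFinset, ctx.newOrd_toFinset]
    exact ctx.activeC _ h1 h2 ha
  have hDS : ∀ {k} {a : α}, a ∈ D k → a ∈ S.ord k ∧ a ∈ S.ord (k + 1) := by
    intro k a ha
    constructor
    · rw [← List.mem_toFinset, S.perm]; exact (Finset.mem_inter.1 ha).1
    · rw [← List.mem_toFinset, S.perm]; exact (Finset.mem_inter.1 ha).2
  -- reorganize both sums as double sums over pairs
  have hreorg : ∀ (g : ℕ → α × α → ℕ),
      (∑ k ∈ Finset.Ico I J, ∑ p ∈ T ×ˢ T, g k p) =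
        (∑ u ∈ T \ C, ∑ v ∈ T \ C, (∑ k ∈ Finset.Ico I J, g k (u, v))) +
          ((∑ u ∈ T \ C, ∑ v ∈ C, (∑ k ∈ Finset.Ico I J, g k (u, v))) +
            ((∑ u ∈ C, ∑ v ∈ T \ C, (∑ k ∈ Finset.Ico I J, g k (u, v))) +
              ∑ u ∈ C, ∑ v ∈ C, (∑ k ∈ Finset.Ico I J, g k (u, v)))) := by
    intro g
    rw [Finset.sum_comm]
    rw [Finset.sum_product (f := fun p => ∑ k ∈ Finset.Ico I J, g k p)]
    rw [← Finset.sum_sdiff hCT]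
    simp_rw [← Finset.sum_sdiff hCT]
    rw [Finset.sum_add_distrib, Finset.sum_add_distrib]
    omega
  have hconv1 : (∑ k ∈ Finset.Ico I J, ∑ p ∈ T ×ˢ T, stepInd P (newSol ctx) k p) =
      ∑ k ∈ Finset.Ico I J, ∑ p ∈ T ×ˢ T, f' k p := rfl
  have hconv2 : (∑ k ∈ Finset.Ico I J, ∑ p ∈ T ×ˢ T, stepInd P S k p) =
      ∑ k ∈ Finset.Ico I J, ∑ p ∈ T ×ˢ T, f k p := rfl
  rw [hconv1, hconv2, hreorg f', hreorg f]
  -- out/out block : equal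
  have hXX : ∀ u ∈ T \ C, ∀ v ∈ T \ C,
      (∑ k ∈ Finset.Ico I J, f' k (u, v)) = ∑ k ∈ Finset.Ico I J, f k (u, v) := by
    intro u hu v hv
    rw [Finset.mem_sdiff] at hu hv
    apply Finset.sum_congr rfl
    intro k _
    simp only [hf', hf, indA]
    exact if_congr (by rw [ctx.bef_new_out hu.2 hv.2, ctx.bef_new_out hv.2 hu.2]) rfl rfl
  -- mixed blocks
  have hmix1 : ∀ c ∈ C, ∀ x ∈ T \ C,
      (∑ k ∈ Finset.Ico I J, f' k (c, x)) = Ffun P S I J cs x := by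
    intro c hc x hx
    rw [Finset.mem_sdiff] at hx
    rw [← hGF]
    apply Finset.sum_congr rfl
    intro k hk
    rw [Finset.mem_Ico] at hk
    simp only [hf', hf, indA]
    by_cases hxD : x ∈ D k
    · obtain ⟨hx1, hx2⟩ := hDS hxD
      have e1 := (ctx.bef_new_mixed hk.1 (le_of_lt hk.2) hc hx.2 hx1).1
      have e2 := (ctx.bef_new_mixed (by omega : I ≤ k + 1) (by omega : k + 1 ≤ J) hc hx.2 hx2).2
      apply if_congr _ rfl rfl
      constructor
      · rintro ⟨-, h2, h3, h4⟩
        exact ⟨hCD hk.1 hk.2 ctx.hcs, h2, e1.1 h3, e2.1 h4⟩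
      · rintro ⟨-, h2, h3, h4⟩
        exact ⟨hCD hk.1 hk.2 hc, h2, e1.2 h3, e2.2 h4⟩
    · rw [if_neg (by tauto), if_neg (by tauto)]
  have hmix2 : ∀ c ∈ C, ∀ x ∈ T \ C,
      (∑ k ∈ Finset.Ico I J, f' k (x, c)) = Ffun P S I J x cs := by
    intro c hc x hx
    rw [Finset.mem_sdiff] at hx
    rw [← hGF]
    apply Finset.sum_congr rfl
    intro k hk
    rw [Finset.mem_Ico] at hk
    simp only [hf', hf, indA]
    by_cases hxD : x ∈ D k
    · obtain ⟨hx1, hx2⟩ := hDS hxD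
      have e1 := (ctx.bef_new_mixed hk.1 (le_of_lt hk.2) hc hx.2 hx1).2
      have e2 := (ctx.bef_new_mixed (by omega : I ≤ k + 1) (by omega : k + 1 ≤ J) hc hx.2 hx2).1
      apply if_congr _ rfl rfl
      constructor
      · rintro ⟨h1, -, h3, h4⟩
        exact ⟨h1, hCD hk.1 hk.2 ctx.hcs, e1.1 h3, e2.1 h4⟩
      · rintro ⟨h1, -, h3, h4⟩
        exact ⟨h1, hCD hk.1 hk.2 hc, e1.2 h3, e2.2 h4⟩
    · rw [if_neg (by tauto), if_neg (by tauto)]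
  -- in/in block
  have hCC : (∑ u ∈ C, ∑ v ∈ C, ∑ k ∈ Finset.Ico I J, f' k (u, v)) ≤
      ∑ u ∈ C, ∑ v ∈ C, ∑ k ∈ Finset.Ico I J, f k (u, v) := by
    have key : ∀ c ∈ C, ∀ c' ∈ C,
        (∑ k ∈ Finset.Ico I J, f' k (c, c')) + (∑ k ∈ Finset.Ico I J, f' k (c', c)) ≤
          (∑ k ∈ Finset.Ico I J, f k (c, c')) + (∑ k ∈ Finset.Ico I J, f k (c', c)) := by
      intro c hc c' hc'
      by_cases hcc : c = c'
      · subst hcc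
        have z : ∀ k ∈ Finset.Ico I J, f' k (c, c) = 0 := fun k _ => indA_diag
        rw [Finset.sum_congr rfl z]
        simp
      · have hterm' : ∀ k, I ≤ k → k < J → f' k (c, c') + f' k (c', c) =
            if Bef (newOrd P S C I J cs k) c c' ↔ Bef (newOrd P S C I J cs (k + 1)) c c'
              then 0 else 1 := by
          intro k h1 h2
          exact indA_pair_flip (ctx.newOrd_nodup k) (ctx.newOrd_nodup (k + 1))
            (hCD h1 h2 hc) (hCD h1 h2 hc')
            (hNord h1 (by omega) hc) (hNord h1 (by omega) hc')
            (hNord (by omega) (by omega) hc) (hNord (by omega) (by omega) hc') hcc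
        have hterm : ∀ k, I ≤ k → k < J → f k (c, c') + f k (c', c) =
            if Bef (S.ord k) c c' ↔ Bef (S.ord (k + 1)) c c' then 0 else 1 := by
          intro k h1 h2
          exact indA_pair_flip (S.nodup k) (S.nodup (k + 1))
            (hCD h1 h2 hc) (hCD h1 h2 hc')
            (hSord h1 (by omega) hc) (hSord h1 (by omega) hc')
            (hSord (by omega) (by omega) hc) (hSord (by omega) (by omega) hc') hcc
        rw [← Finset.sum_add_distrib, ← Finset.sum_add_distrib]
        have hnew : (∑ k ∈ Finset.Ico I J, (f' k (c, c') + f' k (c', c))) =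
            if Bef (S.ord I) c c' ↔ Bef (S.ord J) c c' then 0 else 1 := by
          rw [Finset.sum_eq_single_of_mem (J - 1)
            (Finset.mem_Ico.2 ⟨by omega, by omega⟩)]
          · have hJ1 : J - 1 + 1 = J := by omega
            rw [hterm' (J - 1) (by omega) (by omega)]
            have eL : Bef (newOrd P S C I J cs (J - 1)) c c' ↔ Bef (S.ord I) c c' :=
              ctx.bef_new_in (by omega) (by omega) hc hc'
            have eR : Bef (newOrd P S C I J cs (J - 1 + 1)) c c' ↔ Bef (S.ord J) c c' := by
              rw [hJ1, newOrd_eq (by omega)]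
            exact if_congr (iff_congr eL eR) rfl rfl
          · intro k hk hkJ
            rw [Finset.mem_Ico] at hk
            rw [hterm' k hk.1 hk.2, if_pos]
            have eL := ctx.bef_new_in hk.1 hk.2 hc hc'
            have eR := ctx.bef_new_in (by omega : I ≤ k + 1) (by omega : k + 1 < J) hc hc'
            exact eL.trans eR.symm
        rw [hnew]
        by_cases hss : Bef (S.ord I) c c' ↔ Bef (S.ord J) c c'
        · rw [if_pos hss]
          exact Nat.zero_le _
        · rw [if_neg hss]
          obtain ⟨k₀, h1, h2, h3⟩ :=
            exists_flip (s := fun k => Bef (S.ord k) c c') (le_of_lt ctx.hIJ) hss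
          have h4 : f k₀ (c, c') + f k₀ (c', c) = 1 := by
            rw [hterm k₀ h1 h2, if_neg h3]
          calc (1 : ℕ) = f k₀ (c, c') + f k₀ (c', c) := h4.symm
            _ ≤ ∑ k ∈ Finset.Ico I J, (f k (c, c') + f k (c', c)) :=
                Finset.single_le_sum (f := fun k => f k (c, c') + f k (c', c))
                  (fun i _ => Nat.zero_le _) (Finset.mem_Ico.2 ⟨h1, h2⟩)
    have swap' : (∑ u ∈ C, ∑ v ∈ C, ∑ k ∈ Finset.Ico I J, f' k (v, u)) =
        ∑ u ∈ C, ∑ v ∈ C, ∑ k ∈ Finset.Ico I J, f' k (u, v) := Finset.sum_comm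
    have swap : (∑ u ∈ C, ∑ v ∈ C, ∑ k ∈ Finset.Ico I J, f k (v, u)) =
        ∑ u ∈ C, ∑ v ∈ C, ∑ k ∈ Finset.Ico I J, f k (u, v) := Finset.sum_comm
    have hsum : (∑ u ∈ C, ∑ v ∈ C,
        ((∑ k ∈ Finset.Ico I J, f' k (u, v)) + ∑ k ∈ Finset.Ico I J, f' k (v, u))) ≤
        ∑ u ∈ C, ∑ v ∈ C,
        ((∑ k ∈ Finset.Ico I J, f k (u, v)) + ∑ k ∈ Finset.Ico I J, f k (v, u)) := by
      apply Finset.sum_le_sum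
      intro u hu
      apply Finset.sum_le_sum
      intro v hv
      exact key u hu v hv
    rw [Finset.sum_congr rfl (fun u (_ : u ∈ C) => Finset.sum_add_distrib),
        Finset.sum_congr rfl (fun u (_ : u ∈ C) => Finset.sum_add_distrib),
        Finset.sum_add_distrib, Finset.sum_add_distrib, swap', swap] at hsum
    omega
  -- mixed block inequality
  have hM : (∑ u ∈ T \ C, ∑ v ∈ C, ∑ k ∈ Finset.Ico I J, f' k (u, v)) +
      (∑ u ∈ C, ∑ v ∈ T \ C, ∑ k ∈ Finset.Ico I J, f' k (u, v)) ≤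
      (∑ u ∈ T \ C, ∑ v ∈ C, ∑ k ∈ Finset.Ico I J, f k (u, v)) +
      (∑ u ∈ C, ∑ v ∈ T \ C, ∑ k ∈ Finset.Ico I J, f k (u, v)) := by
    have swapX' : (∑ u ∈ T \ C, ∑ v ∈ C, ∑ k ∈ Finset.Ico I J, f' k (u, v)) =
        ∑ u ∈ C, ∑ v ∈ T \ C, ∑ k ∈ Finset.Ico I J, f' k (v, u) := Finset.sum_comm
    have swapX : (∑ u ∈ T \ C, ∑ v ∈ C, ∑ k ∈ Finset.Ico I J, f k (u, v)) =
        ∑ u ∈ C, ∑ v ∈ T \ C, ∑ k ∈ Finset.Ico I J, f k (v, u) := Finset.sum_comm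
    rw [swapX', swapX]
    have hL : (∑ u ∈ C, ∑ v ∈ T \ C, ∑ k ∈ Finset.Ico I J, f' k (v, u)) +
        (∑ u ∈ C, ∑ v ∈ T \ C, ∑ k ∈ Finset.Ico I J, f' k (u, v)) =
        C.card • Wt P S C I J cs := by
      rw [← Finset.sum_add_distrib]
      rw [Finset.sum_congr rfl (fun u (_ : u ∈ C) => Finset.sum_add_distrib.symm)]
      rw [Finset.sum_congr rfl (fun c (hc : c ∈ C) => Finset.sum_congr rfl
        (fun x hx => by rw [hmix2 c hc x hx, hmix1 c hc x hx, Nat.add_comm]))]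
      rw [Finset.sum_const]
      rfl
    have hR : (∑ u ∈ C, ∑ v ∈ T \ C, ∑ k ∈ Finset.Ico I J, f k (v, u)) +
        (∑ u ∈ C, ∑ v ∈ T \ C, ∑ k ∈ Finset.Ico I J, f k (u, v)) =
        ∑ c ∈ C, Wt P S C I J c := by
      rw [← Finset.sum_add_distrib]
      rw [Finset.sum_congr rfl (fun u (_ : u ∈ C) => Finset.sum_add_distrib.symm)]
      apply Finset.sum_congr rfl
      intro c hc
      rw [Wt]
      apply Finset.sum_congr rfl
      intro x hx
      rw [hGF, hGF, Nat.add_comm]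
    have hns : C.card • Wt P S C I J cs ≤ ∑ c ∈ C, Wt P S C I J c :=
      Finset.card_nsmul_le_sum C (Wt P S C I J) _ hmin
    rw [smul_eq_mul] at hL hns
    omega
  have eXX : (∑ u ∈ T \ C, ∑ v ∈ T \ C, ∑ k ∈ Finset.Ico I J, f' k (u, v)) =
      ∑ u ∈ T \ C, ∑ v ∈ T \ C, ∑ k ∈ Finset.Ico I J, f k (u, v) :=
    Finset.sum_congr rfl (fun u hu => Finset.sum_congr rfl (fun v hv => hXX u hu v hv))
  omega

end SLAux

namespace SLAux
variable {α : Type*} [DecidableEq α]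
variable {P : SLInstance α} {S : SLSolution P} {C : Finset α} {I J : ℕ} {cs : α}

theorem FixCtx.restrict_new_self (ctx : FixCtx P S C I J cs) {i₂ : ℕ}
    (h1 : I ≤ i₂) (h2 : i₂ < J) :
    restrict (newOrd P S C I J cs i₂) C = restrict (S.ord I) C := by
  rcases eq_or_lt_of_le h1 with rfl | hlt
  · rw [newOrd_eq (by omega)]
  · rw [newOrd_eq_gather ⟨hlt, h2⟩]
    exact restrict_gather_self ctx.hcs ctx.sig_nodup ctx.sig_toFinset (S.nodup i₂)
      (ctx.csmem (le_of_lt hlt) (le_of_lt h2))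

theorem FixCtx.blockIn_gather (ctx : FixCtx P S C I J cs) {k : ℕ} (h1 : I < k) (h2 : k < J) :
    ∃ a b, gather C cs (restrict (S.ord I) C) (S.ord k) =
      a ++ restrict (S.ord I) C ++ b := by
  obtain ⟨u, v, huv, hu, hv⟩ := exists_split (S.nodup k) (ctx.csmem (le_of_lt h1) (le_of_lt h2))
  rw [huv, gather_split ctx.hcs hu hv]
  exact ⟨_, _, rfl⟩

theorem FixCtx.good_inside (ctx : FixCtx P S C I J cs) {i₂ j₂ k₂ : ℕ}
    (h1 : I ≤ i₂) (h2 : j₂ ≤ J) (hk1 : i₂ < k₂) (hk2 : k₂ < j₂) :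
    GoodT (newSol ctx) (i₂, j₂, C, k₂) := by
  have hk₂ : I < k₂ ∧ k₂ < J := ⟨by omega, by omega⟩
  show BlockIn _ _
  rw [show (newSol ctx).ord i₂ = newOrd P S C I J cs i₂ from rfl,
    show (newSol ctx).ord k₂ = newOrd P S C I J cs k₂ from rfl]
  rw [ctx.restrict_new_self h1 (by omega), newOrd_eq_gather hk₂]
  exact ctx.blockIn_gather hk₂.1 hk₂.2

theorem FixCtx.good_preserved (ctx : FixCtx P S C I J cs)
    (hsmall : ∀ t : ℕ × ℕ × Finset α × ℕ, HypT P t → t.2.2.1.card < C.card → GoodT S t)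
    (hmax : ∀ a b, (a, C) ∈ P.inters → (b, C) ∈ P.inters → a < b → Quiet P C a b →
      b ≤ I ∨ J ≤ a ∨ (I ≤ a ∧ b ≤ J))
    {t : ℕ × ℕ × Finset α × ℕ} (ht : HypT P t) (hg : GoodT S t) : GoodT (newSol ctx) t := by
  obtain ⟨i₂, j₂, C₂, k₂⟩ := t
  obtain ⟨hi₂, hj₂, hij₂, hq₂, hk1, hk2⟩ := ht
  replace hi₂ : (i₂, C₂) ∈ P.inters := hi₂
  replace hj₂ : (j₂, C₂) ∈ P.inters := hj₂
  replace hij₂ : i₂ < j₂ := hij₂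
  replace hq₂ : Quiet P C₂ i₂ j₂ := hq₂
  replace hk1 : i₂ < k₂ := hk1
  replace hk2 : k₂ < j₂ := hk2
  show BlockIn (restrict (newOrd P S C I J cs i₂) C₂) (newOrd P S C I J cs k₂)
  have hgb : BlockIn (restrict (S.ord i₂) C₂) (S.ord k₂) := hg
  by_cases hCC : C₂ = C
  · subst hCC
    rcases hmax i₂ j₂ hi₂ hj₂ hij₂ hq₂ with h | h | ⟨hIi, hjJ⟩
    · rw [newOrd_eq (by omega), newOrd_eq (by omega)]
      exact hgb
    · rw [newOrd_eq (by omega), newOrd_eq (by omega)]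
      exact hgb
    · exact ctx.good_inside hIi hjJ hk1 hk2
  by_cases hdisj : Disjoint C₂ C
  · have hρmem : ∀ x ∈ restrict (S.ord i₂) C₂, x ∉ C := by
      intro x hx
      rw [restrict, List.mem_filter] at hx
      have : x ∈ C₂ := by simpa using hx.2
      exact fun hxC => Finset.disjoint_left.1 hdisj this hxC
    have hρ : restrict (newOrd P S C I J cs i₂) C₂ = restrict (S.ord i₂) C₂ := by
      by_cases hint : I < i₂ ∧ i₂ < J
      · rw [newOrd_eq_gather hint]
        exact restrict_gather_disj ctx.hcs ctx.sig_nodup ctx.sig_toFinset (S.nodup i₂)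
          (ctx.csmem (le_of_lt hint.1) (le_of_lt hint.2))
          (fun x hx hxC => Finset.disjoint_left.1 hdisj hx hxC)
      · rw [newOrd_eq hint]
    rw [hρ]
    by_cases hint : I < k₂ ∧ k₂ < J
    · rw [newOrd_eq_gather hint]
      obtain ⟨a, b, hab⟩ := hgb
      refine ⟨gather C cs (restrict (S.ord I) C) a, gather C cs (restrict (S.ord I) C) b, ?_⟩
      rw [hab, gather_append, gather_append, gather_of_not_mem ctx.hcs hρmem]
    · rw [newOrd_eq hint]
      exact hgb
  -- C₂ ≠ C, not disjoint
  by_cases hi₂int : I < i₂ ∧ i₂ < J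
  · -- interaction (i₂, C₂) occurs strictly inside the window, so C ⊆ C₂
    have hCsub : C ⊆ C₂ := quiet_subset ctx.hq hi₂int.1 hi₂int.2 hi₂ hdisj
    have hj₂J : j₂ ≤ J := by
      by_contra h
      push_neg at h
      have hC₂sub : C₂ ⊆ C := quiet_subset hq₂ hi₂int.2 h ctx.hJ
        (fun hd => hdisj (Disjoint.symm hd))
      exact hCC (subset_antisymm hC₂sub hCsub)
    have hk₂int : I < k₂ ∧ k₂ < J := ⟨by omega, by omega⟩
    rw [newOrd_eq_gather hk₂int, newOrd_eq_gather hi₂int]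
    rw [restrict_gather_superset ctx.hcs ctx.sig_nodup ctx.sig_toFinset (S.nodup i₂)
      (ctx.csmem (le_of_lt hi₂int.1) (le_of_lt hi₂int.2)) (fun x hx => hCsub hx)]
    obtain ⟨a, b, hab⟩ := hgb
    exact ⟨gather C cs (restrict (S.ord I) C) a, gather C cs (restrict (S.ord I) C) b,
      by rw [hab, gather_append, gather_append]⟩
  by_cases hk₂int : I < k₂ ∧ k₂ < J
  · -- i₂ before the window, j₂ after it, C₂ ⊊ C
    have hi₂I : i₂ ≤ I := by omega
    have hIj₂ : I < j₂ := by omega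
    have hi₂I' : i₂ < I := by
      rcases eq_or_lt_of_le hi₂I with rfl | h
      · exact absurd (eq_of_not_disjoint hi₂ ctx.hI hdisj) hCC
      · exact h
    have hj₂J : J < j₂ := by
      rcases lt_trichotomy j₂ J with h | h | h
      · have hCsub : C ⊆ C₂ := quiet_subset ctx.hq (by omega) h hj₂ hdisj
        have hC₂sub : C₂ ⊆ C := quiet_subset hq₂ hi₂I' hIj₂ ctx.hI
          (fun hd => hdisj (Disjoint.symm hd))
        exact absurd (subset_antisymm hC₂sub hCsub) hCC
      · subst h
        exact absurd (eq_of_not_disjoint hj₂ ctx.hJ hdisj) hCC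
      · exact h
    have hC₂sub : C₂ ⊆ C := quiet_subset hq₂ hi₂I' hIj₂ ctx.hI
      (fun hd => hdisj (Disjoint.symm hd))
    have hhyp : HypT P (i₂, j₂, C₂, I) := ⟨hi₂, hj₂, hij₂, hq₂, hi₂I', hIj₂⟩
    have hcard : C₂.card < C.card :=
      Finset.card_lt_card (Finset.ssubset_iff_subset_ne.2 ⟨hC₂sub, hCC⟩)
    have hgI : BlockIn (restrict (S.ord i₂) C₂) (S.ord I) := hsmall _ hhyp hcard
    obtain ⟨aI, bI, habI⟩ := hgI
    have hσsplit : restrict (S.ord I) C =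
        restrict aI C ++ restrict (S.ord i₂) C₂ ++ restrict bI C := by
      rw [restrict, habI, List.filter_append, List.filter_append]
      have : (restrict (S.ord i₂) C₂).filter (fun x => decide (x ∈ C)) =
          restrict (S.ord i₂) C₂ := by
        rw [List.filter_eq_self]
        intro x hx
        rw [restrict, List.mem_filter] at hx
        have : x ∈ C₂ := by simpa using hx.2
        simp [hC₂sub this]
      rw [this]
      rfl
    rw [newOrd_eq (by omega), newOrd_eq_gather hk₂int]
    obtain ⟨u, v, huv, hu, hv⟩ :=
      exists_split (S.nodup k₂) (ctx.csmem (le_of_lt hk₂int.1) (le_of_lt hk₂int.2))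
    rw [huv, gather_split ctx.hcs hu hv, hσsplit]
    refine ⟨u.filter (fun x => decide (x ∉ C)) ++ restrict aI C,
      restrict bI C ++ v.filter (fun x => decide (x ∉ C)), ?_⟩
    simp [List.append_assoc]
  · rw [newOrd_eq (by omega), newOrd_eq (by omega)]
    exact hgb

end SLAux

namespace SLAux
variable {α : Type*} [DecidableEq α]
variable {P : SLInstance α} {S : SLSolution P} {C : Finset α} {I J : ℕ} {cs : α}

theorem restrict_restrict_subset {l : List α} {C D : Finset α} (h : ∀ x ∈ D, x ∈ C) :
    restrict (restrict l C) D = restrict l D := by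
  rw [restrict, restrict, restrict, List.filter_filter]
  apply List.filter_congr
  intro x _
  by_cases hx : x ∈ D
  · simp [hx, h x hx]
  · simp [hx]

theorem FixCtx.gather_restrict_fix (ctx : FixCtx P S C I J cs) {D : Finset α}
    (hCD : ∀ x ∈ C, x ∈ D) :
    gather C cs (restrict (S.ord I) C) (restrict (S.ord I) D) = restrict (S.ord I) D := by
  obtain ⟨p, m, s, hsplit, hmF⟩ := S.consec _ ctx.hI
  replace hsplit : S.ord I = p ++ m ++ s := hsplit
  replace hmF : m.toFinset = C := hmF
  have hnd : (S.ord I).Nodup := S.nodup I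
  rw [hsplit] at hnd
  have hmC : ∀ y, y ∈ m ↔ y ∈ C := fun y => by rw [← hmF, List.mem_toFinset]
  have hpC : ∀ x ∈ p, x ∉ C := by
    intro x hx hxC
    rw [List.append_assoc, List.nodup_append'] at hnd
    exact hnd.2.2 hx (List.mem_append.2 (Or.inl ((hmC x).2 hxC)))
  have hsC : ∀ x ∈ s, x ∉ C := by
    intro x hx hxC
    rw [List.nodup_append'] at hnd
    exact hnd.2.2 (List.mem_append.2 (Or.inr ((hmC x).2 hxC))) hx
  have hmD : m.filter (fun x => decide (x ∈ D)) = m := by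
    rw [List.filter_eq_self]
    intro x hx
    simp [hCD x ((hmC x).1 hx)]
  have hmCf : m.filter (fun x => decide (x ∈ C)) = m := by
    rw [List.filter_eq_self]
    intro x hx
    simp [(hmC x).1 hx]
  have hσ : restrict (S.ord I) C = m := by
    rw [hsplit, restrict, List.filter_append, List.filter_append, hmCf]
    have h1 : p.filter (fun x => decide (x ∈ C)) = [] :=
      List.filter_eq_nil_iff.2 (fun x hx => by simp [hpC x hx])
    have h2 : s.filter (fun x => decide (x ∈ C)) = [] :=
      List.filter_eq_nil_iff.2 (fun x hx => by simp [hsC x hx])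
    rw [h1, h2]
    simp
  have hsplitD : restrict (S.ord I) D =
      restrict p D ++ restrict (S.ord I) C ++ restrict s D := by
    rw [hσ, hsplit, restrict, restrict, restrict, List.filter_append, List.filter_append, hmD]
  rw [hsplitD]
  apply gather_fix ctx.hcs ctx.sig_nodup ctx.sig_toFinset
  · intro x hx
    exact hpC x (List.mem_of_mem_filter hx)
  · intro x hx
    exact hsC x (List.mem_of_mem_filter hx)

theorem FixCtx.newSol_T1 (ctx : FixCtx P S C I J cs) (hT1 : Type1Consistent P S) :
    Type1Consistent P (newSol ctx) := by
  rintro ⟨t, D⟩ htD j hj hact hqD k hk1 hk2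
  have O := hT1 (t, D) htD
  have O₀ : ∀ k', j ≤ k' → k' ≤ t → restrict (S.ord k') D = restrict (S.ord t) D :=
    O j hj hact hqD
  show restrict (newOrd P S C I J cs k) D = restrict (newOrd P S C I J cs t) D
  by_cases hcase1 : t ≤ I ∨ J ≤ j
  · have e : ∀ m, j ≤ m → m ≤ t → newOrd P S C I J cs m = S.ord m := by
      intro m h1 h2
      rcases hcase1 with h | h
      · exact newOrd_eq (by omega)
      · exact newOrd_eq (by omega)
    rw [e k hk1 hk2, e t (le_trans hk1 hk2) le_rfl]
    exact O₀ k hk1 hk2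
  push_neg at hcase1
  obtain ⟨hIt, hjJ⟩ := hcase1
  by_cases hDdisj : Disjoint D C
  · have hre : ∀ m, restrict (newOrd P S C I J cs m) D = restrict (S.ord m) D := by
      intro m
      by_cases hint : I < m ∧ m < J
      · rw [newOrd_eq_gather hint]
        exact restrict_gather_disj ctx.hcs ctx.sig_nodup ctx.sig_toFinset (S.nodup m)
          (ctx.csmem (le_of_lt hint.1) (le_of_lt hint.2))
          (fun x hx hxC => Finset.disjoint_left.1 hDdisj hx hxC)
      · rw [newOrd_eq hint]
    rw [hre k, hre t]
    exact O₀ k hk1 hk2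
  by_cases htJ : t < J
  · -- t strictly inside the window, hence C ⊆ D
    have hCD : C ⊆ D := quiet_subset ctx.hq hIt htJ htD hDdisj
    have hRt : restrict (newOrd P S C I J cs t) D =
        gather C cs (restrict (S.ord I) C) (restrict (S.ord t) D) := by
      rw [newOrd_eq_gather ⟨hIt, htJ⟩]
      exact restrict_gather_superset ctx.hcs ctx.sig_nodup ctx.sig_toFinset (S.nodup t)
        (ctx.csmem (le_of_lt hIt) (le_of_lt htJ)) (fun x hx => hCD hx)
    by_cases hkint : I < k
    · rw [newOrd_eq_gather ⟨hkint, by omega⟩, hRt]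
      rw [restrict_gather_superset ctx.hcs ctx.sig_nodup ctx.sig_toFinset (S.nodup k)
        (ctx.csmem (le_of_lt hkint) (by omega)) (fun x hx => hCD hx)]
      rw [O₀ k hk1 hk2]
    · push_neg at hkint
      rw [newOrd_eq (by omega), hRt]
      have hjI : j ≤ I := le_trans hk1 hkint
      have hIt' : restrict (S.ord I) D = restrict (S.ord t) D := O₀ I hjI (by omega)
      rw [← hIt', ctx.gather_restrict_fix (fun x hx => hCD hx), hIt']
      exact O₀ k hk1 hk2
  · -- t at or after the right end of the window
    push_neg at htJ
    have hDsub : D ⊆ C := by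
      rcases hqD J hjJ htJ with hall | ⟨p, hp, hpk, hpD⟩
      · exact absurd (Disjoint.symm (hall _ ctx.hJ rfl)) hDdisj
      · obtain ⟨p1, p2⟩ := p
        cases hpk
        have hp2C : p2 = C := by
          apply eq_of_not_disjoint hp ctx.hJ
          intro hd
          exact hDdisj (hd.mono_left hpD)
        exact hp2C ▸ hpD
    have hkey : restrict (S.ord I) D = restrict (S.ord t) D := by
      by_cases hjI : j ≤ I
      · exact O₀ I hjI (by omega)
      · push_neg at hjI
        have hact' : ∀ k', I ≤ k' → k' ≤ t → D ⊆ P.AC k' := by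
          intro k' h1 h2
          by_cases h3 : j ≤ k'
          · exact hact k' h3 h2
          · push_neg at h3
            exact fun x hx => ctx.activeC k' h1 (by omega) (hDsub hx)
        have hq' : ∀ k', I < k' → k' ≤ t →
            ((∀ p ∈ P.inters, p.1 = k' → Disjoint p.2 D) ∨
              ∃ p ∈ P.inters, p.1 = k' ∧ D ⊆ p.2) := by
          intro k' h1 h2
          by_cases h3 : j < k'
          · exact hqD k' h3 h2
          · push_neg at h3
            rcases ctx.hq k' h1 (by omega) with hall | ⟨p, hp, hpk, hpC⟩
            · exact Or.inl (fun p hp hpk => (hall p hp hpk).mono_right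
                (Finset.le_iff_subset.2 hDsub))
            · exact Or.inr ⟨p, hp, hpk, fun x hx => hpC (hDsub hx)⟩
        exact O I (by omega) hact' hq' I le_rfl (by omega)
    by_cases hkint : I < k ∧ k < J
    · rw [newOrd_eq_gather hkint, newOrd_eq (by omega)]
      rw [restrict_gather_subset ctx.hcs ctx.sig_nodup ctx.sig_toFinset (S.nodup k)
        (ctx.csmem (le_of_lt hkint.1) (le_of_lt hkint.2)) (fun x hx => hDsub hx)]
      rw [restrict_restrict_subset (fun x hx => hDsub hx), hkey]
    · rw [newOrd_eq hkint, newOrd_eq (by omega)]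
      exact O₀ k hk1 hk2

end SLAux

namespace SLAux
variable {α : Type*} [DecidableEq α]

theorem fix_step (P : SLInstance α) (S : SLSolution P) (hne : (Bad P S).Nonempty) :
    ∃ S' : SLSolution P, (Bad P S').card < (Bad P S).card ∧ crS P S' ≤ crS P S ∧
      (Type1Consistent P S → Type1Consistent P S') := by
  classical
  obtain ⟨t₀, ht₀mem, hmin₀⟩ := Finset.exists_min_image (Bad P S) (fun t => t.2.2.1.card) hne
  obtain ⟨i₀, j₀, C, k₀⟩ := t₀
  have ht₀ := mem_bad.1 ht₀mem
  obtain ⟨hdom, hhyp, hbad⟩ := ht₀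
  obtain ⟨hi₀, hj₀, hij₀, hq₀, hk₀1, hk₀2⟩ := hhyp
  replace hi₀ : (i₀, C) ∈ P.inters := hi₀
  replace hj₀ : (j₀, C) ∈ P.inters := hj₀
  replace hij₀ : i₀ < j₀ := hij₀
  replace hq₀ : Quiet P C i₀ j₀ := hq₀
  replace hk₀1 : i₀ < k₀ := hk₀1
  replace hk₀2 : k₀ < j₀ := hk₀2
  replace hbad : ¬ BlockIn (restrict (S.ord i₀) C) (S.ord k₀) := hbad
  replace hmin₀ : ∀ t ∈ Bad P S, C.card ≤ t.2.2.1.card := hmin₀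
  -- C is nonempty
  have hCne : C.Nonempty := by
    by_contra h
    rw [Finset.not_nonempty_iff_eq_empty] at h
    apply hbad
    subst h
    have hres : restrict (S.ord i₀) (∅ : Finset α) = [] := by
      rw [restrict, List.filter_eq_nil_iff]
      intro a _
      simp
    exact ⟨[], S.ord k₀, by rw [hres]; simp⟩
  -- choose a maximal quiet window (I, J) around (i₀, j₀)
  set QP : Finset (ℕ × ℕ) := (Finset.range P.len ×ˢ Finset.range P.len).filter
    (fun q => (q.1, C) ∈ P.inters ∧ (q.2, C) ∈ P.inters ∧ q.1 ≤ i₀ ∧ j₀ ≤ q.2 ∧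
      q.1 < q.2 ∧ Quiet P C q.1 q.2) with hQP
  have hQPmem : (i₀, j₀) ∈ QP := by
    rw [hQP, Finset.mem_filter]
    refine ⟨?_, hi₀, hj₀, le_rfl, le_rfl, hij₀, hq₀⟩
    rw [Finset.mem_product, Finset.mem_range, Finset.mem_range]
    exact ⟨(P.valid _ hi₀).1, (P.valid _ hj₀).1⟩
  obtain ⟨q, hqQP, hqmax⟩ := Finset.exists_max_image QP (fun q => q.2 - q.1) ⟨_, hQPmem⟩
  obtain ⟨I, J⟩ := q
  rw [hQP, Finset.mem_filter] at hqQP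
  obtain ⟨hqrange, hIC, hJC, hIle, hJge, hIJ, hquiet⟩ := hqQP
  replace hIC : (I, C) ∈ P.inters := hIC
  replace hJC : (J, C) ∈ P.inters := hJC
  replace hIle : I ≤ i₀ := hIle
  replace hJge : j₀ ≤ J := hJge
  replace hIJ : I < J := hIJ
  replace hquiet : Quiet P C I J := hquiet
  -- maximality of the window
  have hmax : ∀ a b, (a, C) ∈ P.inters → (b, C) ∈ P.inters → a < b → Quiet P C a b →
      b ≤ I ∨ J ≤ a ∨ (I ≤ a ∧ b ≤ J) := by
    intro a b ha hb hab hqab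
    by_contra h
    push_neg at h
    obtain ⟨h1, h2, h3⟩ := h
    have h3' : a < I ∨ J < b := by
      by_cases hIa : I ≤ a
      · exact Or.inr (lt_of_not_ge (fun hc => absurd (h3 hIa) (not_lt.2 hc)))
      · exact Or.inl (lt_of_not_ge hIa)
    have hquiet' : Quiet P C (min I a) (max J b) := by
      intro k hk1 hk2
      by_cases hin1 : I < k ∧ k < J
      · exact hquiet k hin1.1 hin1.2
      by_cases hin2 : a < k ∧ k < b
      · exact hqab k hin2.1 hin2.2
      exfalso
      rcases Nat.lt_or_ge I b with _ | hIb
      · rcases Nat.lt_or_ge a J with _ | haJ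
        · omega
        · omega
      · omega
    have hmem : (min I a, max J b) ∈ QP := by
      rw [hQP, Finset.mem_filter]
      have hblen : b < P.len := (P.valid _ hb).1
      have hJlen : J < P.len := (P.valid _ hJC).1
      refine ⟨?_, ?_, ?_, by omega, by omega, by omega, hquiet'⟩
      · rw [Finset.mem_product, Finset.mem_range, Finset.mem_range]
        constructor
        · have := (P.valid _ ha).1
          simp only [min_def]
          split <;> omega
        · simp only [max_def]
          split <;> omega
      · rcases Nat.le_total I a with h' | h'
        · rw [min_eq_left h']; exact hIC
        · rw [min_eq_right h']; exact ha
      · rcases Nat.le_total J b with h' | h'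
        · rw [max_eq_right h']; exact hb
        · rw [max_eq_left h']; exact hJC
    have := hqmax _ hmem
    simp only at this
    omega
  -- choose the representative cs minimizing the weight
  obtain ⟨cs, hcsC, hcsmin⟩ := Finset.exists_min_image C (Wt P S C I J) hCne
  have ctx : FixCtx P S C I J cs := ⟨hIJ, hIC, hJC, hquiet, hcsC⟩
  refine ⟨newSol ctx, ?_, ctx.crS_newSol_le hcsmin, ctx.newSol_T1⟩
  -- the number of violated constraints strictly decreases
  have hsmall : ∀ t : ℕ × ℕ × Finset α × ℕ, HypT P t → t.2.2.1.card < C.card → GoodT S t := by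
    intro t ht hc
    by_contra hbadT
    have hmem : t ∈ Bad P S := mem_bad.2 ⟨hypT_mem_dom ht, ht, hbadT⟩
    have := hmin₀ t hmem
    omega
  have hsub : Bad P (newSol ctx) ⊆ Bad P S := by
    intro t ht'
    rw [mem_bad] at ht' ⊢
    obtain ⟨hd, hh, hb⟩ := ht'
    exact ⟨hd, hh, fun hgood => hb (ctx.good_preserved hsmall hmax hh hgood)⟩
  have ht₀new : GoodT (newSol ctx) (i₀, j₀, C, k₀) := ctx.good_inside hIle hJge hk₀1 hk₀2
  apply Finset.card_lt_card
  rw [Finset.ssubset_def]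
  refine ⟨hsub, fun hss => ?_⟩
  have := hss ht₀mem
  exact (mem_bad.1 this).2.2 ht₀new

theorem type2_of_bad_empty {P : SLInstance α} {S : SLSolution P} (h : Bad P S = ∅) :
    Type2Consistent P S := by
  intro i j Cc hi hj hij hq k h1 h2
  have hhyp : HypT P (i, j, Cc, k) := ⟨hi, hj, hij, hq, h1, h2⟩
  by_contra hcon
  have hmem : (i, j, Cc, k) ∈ Bad P S := mem_bad.2 ⟨hypT_mem_dom hhyp, hhyp, hcon⟩
  rw [h] at hmem
  exact absurd hmem (Finset.notMem_empty _)

theorem main_aux (P : SLInstance α) :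
    ∀ n (S : SLSolution P), (Bad P S).card ≤ n →
      ∃ S', Type2Consistent P S' ∧ crS P S' ≤ crS P S ∧
        (Type1Consistent P S → Type1Consistent P S') := by
  intro n
  induction n with
  | zero =>
    intro S h
    have hempty : Bad P S = ∅ := Finset.card_eq_zero.1 (Nat.le_zero.1 h)
    exact ⟨S, type2_of_bad_empty hempty, le_rfl, fun h => h⟩
  | succ n ih =>
    intro S h
    by_cases hne : (Bad P S).Nonempty
    · obtain ⟨S₁, h1, h2, h3⟩ := fix_step P S hne
      obtain ⟨S', g1, g2, g3⟩ := ih S₁ (by omega)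
      exact ⟨S', g1, le_trans g2 h2, fun hT => g3 (h3 hT)⟩
    · rw [Finset.not_nonempty_iff_eq_empty] at hne
      exact ⟨S, type2_of_bad_empty hne, le_rfl, fun h => h⟩

end SLAux


/-- From any solution `S` of a storyline instance one can construct a
type-2-consistent solution `S'` with `cr(S') ≤ cr(S)`; moreover, if `S` is
type-1-consistent then `S'` can be taken type-1-consistent as well. -/
theorem exists_type2_consistent_le {α : Type*} [DecidableEq α]
    (P : SLInstance α) (S : SLSolution P) :
    ∃ S' : SLSolution P, Type2Consistent P S' ∧ crS P S' ≤ crS P S ∧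
      (Type1Consistent P S → Type1Consistent P S') :=
  SLAux.main_aux P (SLAux.Bad P S).card S le_rfl
end

section
/- Every storyline instance has a crossing-minimum solution S = (π₁,…,π_ℓ) such that for every time step tᵢ (i ≥ 2) carrying exactly one interaction I: πᵢ decomposes as πᵢ = πᵢ[C_a] ⋆ πᵢ[char(I)] ⋆ πᵢ[C_b] for some sets C_a, C_b, and (a) if C_a ⊆ AC(t_{i−1}) ∩ AC(tᵢ) then πᵢ[C_a] = π_{i−1}[C_a]; (b) if char(I) ⊆ AC(t_{i−1}) ∩ AC(tᵢ) then πᵢ[char(I)] = π_{i−1}[char(I)]; (c) if C_b ⊆ AC(t_{i−1}) ∩ AC(tᵢ) then πᵢ[C_b] = π_{i−1}[C_b]. -/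
set_option linter.unusedSectionVars false
set_option maxHeartbeats 1000000

section Aux
variable {α : Type*} [DecidableEq α]


lemma idx_two (u v : List α) (x y a : α) :
    (u ++ x :: y :: v).idxOf a =
      if a ∈ u then u.idxOf a
      else if a = x then u.length
      else if a = y then u.length + 1
      else u.length + 2 + v.idxOf a := by
  by_cases h : a ∈ u
  · simp [List.idxOf_append_of_mem h, h]
  · rw [List.idxOf_append_of_notMem h, if_neg h]
    by_cases hax : a = x
    · subst hax; simp [List.idxOf_cons_self]
    · rw [List.idxOf_cons_ne _ (fun e => hax e.symm), if_neg hax]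
      by_cases hay : a = y
      · subst hay; simp [List.idxOf_cons_self]
      · rw [List.idxOf_cons_ne _ (fun e => hay e.symm), if_neg hay]
        omega

lemma before_swap (u v : List α) (x y a b : α)
    (hab1 : ¬(a = x ∧ b = y)) (hab2 : ¬(a = y ∧ b = x)) :
    ((u ++ y :: x :: v).idxOf a < (u ++ y :: x :: v).idxOf b ↔
      (u ++ x :: y :: v).idxOf a < (u ++ x :: y :: v).idxOf b) := by
  have ha := List.idxOf_lt_length_iff (a := a) (l := u)
  have hb := List.idxOf_lt_length_iff (a := b) (l := u)
  rw [idx_two, idx_two, idx_two, idx_two]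
  split_ifs <;> simp_all <;> omega

lemma sublist_pair_iff {l : List α} (hl : l.Nodup) {a b : α} (ha : a ∈ l) (hb : b ∈ l)
    (hab : a ≠ b) : List.Sublist [a, b] l ↔ l.idxOf a < l.idxOf b := by
  induction l with
  | nil => simp at ha
  | cons h t ih =>
    obtain ⟨hht, hnd⟩ := List.nodup_cons.mp hl
    by_cases hah : a = h
    · subst hah
      have hbt : b ∈ t := by
        rcases List.mem_cons.mp hb with e | e
        · exact absurd e.symm hab
        · exact e
      refine iff_of_true ((List.singleton_sublist.mpr hbt).cons_cons a) ?_
      rw [List.idxOf_cons_self, List.idxOf_cons_ne _ hab]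
      omega
    · by_cases hbh : b = h
      · subst hbh
        refine iff_of_false ?_ ?_
        · intro hs
          cases hs with
          | cons _ hs' => exact hht (hs'.subset (by simp))
          | cons_cons => exact hab rfl
        · rw [List.idxOf_cons_self, List.idxOf_cons_ne _ (fun e => hah e.symm)]
          omega
      · have hat : a ∈ t := (List.mem_cons.mp ha).resolve_left hah
        have hbt : b ∈ t := (List.mem_cons.mp hb).resolve_left hbh
        rw [List.idxOf_cons_ne _ (fun e => hah e.symm),
            List.idxOf_cons_ne _ (fun e => hbh e.symm)]
        rw [Nat.succ_lt_succ_iff, ← ih hnd hat hbt]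
        constructor
        · intro hs
          cases hs with
          | cons _ hs' => exact hs'
          | cons_cons => exact absurd rfl hah
        · exact fun hs => hs.cons _

lemma exists_adj_inversion {l₁ l₂ : List α} (h₁ : l₁.Nodup) (h₂ : l₂.Nodup)
    (hf : l₁.toFinset = l₂.toFinset) (hne : l₁ ≠ l₂) :
    ∃ u x y v, l₂ = u ++ x :: y :: v ∧ l₁.idxOf y < l₁.idxOf x := by
  by_contra hcon
  push_neg at hcon
  set r : α → α → Prop := fun a b => l₁.idxOf a < l₁.idxOf b with hr
  haveI : IsTrans α r := ⟨fun a b c => Nat.lt_trans⟩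
  haveI : IsAntisymm α r := ⟨fun a b h1 h2 => absurd h2 (Nat.lt_asymm h1)⟩
  have hmem : ∀ c ∈ l₂, c ∈ l₁ := by
    intro c hc
    rw [← List.mem_toFinset, hf, List.mem_toFinset]
    exact hc
  have hchain : l₂.IsChain r := by
    rw [List.isChain_iff_getElem]
    intro i hi
    have hi1 : i < l₂.length := by omega
    have hi2 : i + 1 < l₂.length := by omega
    have hd : l₂ = l₂.take i ++ l₂[i] :: l₂[i+1] :: l₂.drop (i + 2) := by
      conv_lhs => rw [← List.take_append_drop i l₂]
      rw [List.drop_eq_getElem_cons hi1, List.drop_eq_getElem_cons hi2]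
    have hle := hcon (l₂.take i) (l₂[i]) (l₂[i+1]) (l₂.drop (i+2)) hd
    have hne2 : l₂[i] ≠ l₂[i+1] := by
      intro e
      exact absurd (List.Nodup.getElem_inj_iff h₂ |>.mp e) (by omega)
    have h1 : l₂[i] ∈ l₁ := hmem _ (List.getElem_mem hi1)
    have h2 : l₂[i+1] ∈ l₁ := hmem _ (List.getElem_mem hi2)
    have : l₁.idxOf l₂[i] ≠ l₁.idxOf l₂[i+1] := by
      intro e
      exact hne2 ((List.idxOf_inj h1).mp e)
    show l₁.idxOf l₂[i] < l₁.idxOf l₂[i+1]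
    omega
  have hpair : l₂.Pairwise r := List.isChain_iff_pairwise.mp hchain
  have hpair₁ : l₁.Pairwise r := by
    rw [List.pairwise_iff_getElem]
    intro i j hi hj hij
    show l₁.idxOf l₁[i] < l₁.idxOf l₁[j]
    rw [List.Nodup.idxOf_getElem h₁ i hi, List.Nodup.idxOf_getElem h₁ j hj]
    exact hij
  have hperm : l₁.Perm l₂ := List.perm_of_nodup_nodup_toFinset_eq h₁ h₂ hf
  exact hne (List.Perm.eq_of_pairwise (fun a b _ _ h1 h2 => absurd h2 (Nat.lt_asymm h1)) hpair₁ hpair hperm)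

lemma restrict_append (l₁ l₂ : List α) (Z : Finset α) :
    restrict (l₁ ++ l₂) Z = restrict l₁ Z ++ restrict l₂ Z := List.filter_append _ _

lemma toFinset_restrict (l : List α) (Z : Finset α) :
    (restrict l Z).toFinset = l.toFinset ∩ Z := by
  ext a
  simp [restrict, List.mem_filter]

lemma restrict_sublist (l : List α) (Z : Finset α) : (restrict l Z).Sublist l :=
  List.filter_sublist

lemma restrict_eq_self {l : List α} {Z : Finset α} (h : ∀ a ∈ l, a ∈ Z) :
    restrict l Z = l := List.filter_eq_self.mpr (by simpa using h)

lemma restrict_eq_nil {l : List α} {Z : Finset α} (h : ∀ a ∈ l, a ∉ Z) :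
    restrict l Z = [] := by
  simp only [restrict, List.filter_eq_nil_iff]
  simpa using h

lemma restrict_cons_of_mem (l : List α) {Z : Finset α} {a : α} (h : a ∈ Z) :
    restrict (a :: l) Z = a :: restrict l Z := List.filter_cons_of_pos (by simpa using h)

lemma restrict_cons_of_not_mem (l : List α) {Z : Finset α} {a : α} (h : a ∉ Z) :
    restrict (a :: l) Z = restrict l Z := List.filter_cons_of_neg (by simpa using h)

lemma restrict_middle {p m s : List α} (h : (p ++ m ++ s).Nodup) :
    restrict (p ++ m ++ s) m.toFinset = m := by
  rw [restrict_append, restrict_append]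
  obtain ⟨hpm, hs, hd⟩ := List.nodup_append'.mp h
  obtain ⟨hp, hm, hd2⟩ := List.nodup_append'.mp hpm
  rw [restrict_eq_nil (fun a ha hm2 => hd2 ha (List.mem_toFinset.mp hm2)),
      restrict_eq_self (fun a ha => List.mem_toFinset.mpr ha),
      restrict_eq_nil (fun a ha hm2 => hd (List.mem_append_right _ (List.mem_toFinset.mp hm2)) ha)]
  simp

lemma toFinset_swap (u v : List α) (x y : α) :
    (u ++ y :: x :: v).toFinset = (u ++ x :: y :: v).toFinset := by
  ext a; simp; tauto

lemma swap_nodup {u v : List α} {x y : α} (h : (u ++ x :: y :: v).Nodup) :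
    (u ++ y :: x :: v).Nodup := by
  have : (u ++ x :: y :: v).Perm (u ++ y :: x :: v) :=
    List.Perm.append_left u (List.Perm.swap y x v)
  exact this.nodup h

lemma swap_facts {u v : List α} {x y : α} (h : (u ++ x :: y :: v).Nodup) :
    x ≠ y ∧ x ∉ u ∧ y ∉ u := by
  obtain ⟨hu, hxyv, hd⟩ := List.nodup_append'.mp h
  obtain ⟨hx, hyv⟩ := List.nodup_cons.mp hxyv
  refine ⟨fun e => hx (e ▸ List.mem_cons_self), fun hxu => hd hxu (by simp),
    fun hyu => hd hyu (by simp)⟩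

lemma inv_swap_snd {l₁ u v : List α} {x y : α} (hnd : (u ++ x :: y :: v).Nodup)
    (hx : x ∈ l₁.toFinset) (hy : y ∈ l₁.toFinset) (hyx : l₁.idxOf y < l₁.idxOf x) :
    inv l₁ (u ++ x :: y :: v) = inv l₁ (u ++ y :: x :: v) + 1 := by
  obtain ⟨hxy, hxu, hyu⟩ := swap_facts hnd
  have hix : (u ++ x :: y :: v).idxOf x = u.length := by
    rw [idx_two]; simp [hxu]
  have hiy : (u ++ x :: y :: v).idxOf y = u.length + 1 := by
    rw [idx_two]; simp [hyu, Ne.symm hxy]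
  have hix' : (u ++ y :: x :: v).idxOf x = u.length + 1 := by
    rw [idx_two]; simp [hxu, hxy]
  have hiy' : (u ++ y :: x :: v).idxOf y = u.length := by
    rw [idx_two]; simp [hyu]
  unfold inv
  have hset : ((l₁.toFinset ×ˢ l₁.toFinset).filter
      (fun p => l₁.idxOf p.1 < l₁.idxOf p.2 ∧
        (u ++ x :: y :: v).idxOf p.2 < (u ++ x :: y :: v).idxOf p.1)) =
      insert ((y, x) : α × α) ((l₁.toFinset ×ˢ l₁.toFinset).filter
      (fun p => l₁.idxOf p.1 < l₁.idxOf p.2 ∧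
        (u ++ y :: x :: v).idxOf p.2 < (u ++ y :: x :: v).idxOf p.1)) := by
    ext ⟨a, b⟩
    simp only [Finset.mem_insert, Finset.mem_filter, Finset.mem_product, Prod.mk.injEq]
    by_cases hab : a = y ∧ b = x
    · obtain ⟨rfl, rfl⟩ := hab
      simp [hx, hy, hyx, hix, hiy]
    · by_cases hab2 : a = x ∧ b = y
      · obtain ⟨rfl, rfl⟩ := hab2
        simp only [hix, hiy, hix', hiy']
        constructor
        · rintro ⟨-, h2, -⟩; omega
        · rintro (⟨e1, e2⟩ | ⟨-, h2, -⟩)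
          · exact absurd ⟨e1, e2⟩ hab
          · omega
      · rw [before_swap u v x y b a (fun e => hab ⟨e.2, e.1⟩) (fun e => hab2 ⟨e.2, e.1⟩)]
        constructor
        · exact fun h => Or.inr h
        · rintro (⟨rfl, rfl⟩ | h)
          · exact absurd ⟨rfl, rfl⟩ hab
          · exact h
  rw [hset, Finset.card_insert_of_notMem]
  simp only [Finset.mem_filter, Finset.mem_product, not_and]
  intro _ _
  rw [hix', hiy']
  omega

lemma inv_swap_fst_le {l' u v : List α} {x y : α} (hnd : (u ++ x :: y :: v).Nodup) :
    inv (u ++ y :: x :: v) l' ≤ inv (u ++ x :: y :: v) l' + 1 := by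
  obtain ⟨hxy, hxu, hyu⟩ := swap_facts hnd
  have hix : (u ++ x :: y :: v).idxOf x = u.length := by
    rw [idx_two]; simp [hxu]
  have hiy : (u ++ x :: y :: v).idxOf y = u.length + 1 := by
    rw [idx_two]; simp [hyu, Ne.symm hxy]
  have hix' : (u ++ y :: x :: v).idxOf x = u.length + 1 := by
    rw [idx_two]; simp [hxu, hxy]
  have hiy' : (u ++ y :: x :: v).idxOf y = u.length := by
    rw [idx_two]; simp [hyu]
  unfold inv
  rw [toFinset_swap]
  have hsub : ((u ++ x :: y :: v).toFinset ×ˢ (u ++ x :: y :: v).toFinset).filter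
      (fun p => (u ++ y :: x :: v).idxOf p.1 < (u ++ y :: x :: v).idxOf p.2 ∧
        l'.idxOf p.2 < l'.idxOf p.1) ⊆
      insert ((y, x) : α × α) (((u ++ x :: y :: v).toFinset ×ˢ (u ++ x :: y :: v).toFinset).filter
      (fun p => (u ++ x :: y :: v).idxOf p.1 < (u ++ x :: y :: v).idxOf p.2 ∧
        l'.idxOf p.2 < l'.idxOf p.1)) := by
    rintro ⟨a, b⟩ hab
    simp only [Finset.mem_filter, Finset.mem_product] at hab
    obtain ⟨hprod, h1, h2⟩ := hab
    simp only [Finset.mem_insert, Finset.mem_filter, Finset.mem_product, Prod.mk.injEq]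
    by_cases e1 : a = y ∧ b = x
    · exact Or.inl e1
    · by_cases e2 : a = x ∧ b = y
      · obtain ⟨rfl, rfl⟩ := e2
        rw [hix', hiy'] at h1
        omega
      · right
        refine ⟨hprod, ?_, h2⟩
        rwa [before_swap u v x y a b e2 e1] at h1
  exact le_trans (Finset.card_le_card hsub) (Finset.card_insert_le _ _)

lemma before_mono {w : List α} (hw : w.Nodup) {B K : Finset α} (hBK : B ⊆ K) {x y : α}
    (hxB : x ∈ B) (hyB : y ∈ B) (hxy : y ≠ x) (hxw : x ∈ w) (hyw : y ∈ w)
    (h : (restrict w B).idxOf y < (restrict w B).idxOf x) :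
    (restrict w K).idxOf y < (restrict w K).idxOf x := by
  have hndB : (restrict w B).Nodup := hw.filter _
  have hndK : (restrict w K).Nodup := hw.filter _
  have hxB' : x ∈ restrict w B := by simp [restrict, List.mem_filter, hxw, hxB]
  have hyB' : y ∈ restrict w B := by simp [restrict, List.mem_filter, hyw, hyB]
  have hxK' : x ∈ restrict w K := by simp [restrict, List.mem_filter, hxw, hBK hxB]
  have hyK' : y ∈ restrict w K := by simp [restrict, List.mem_filter, hyw, hBK hyB]
  rw [← sublist_pair_iff hndB hyB' hxB' hxy] at h
  rw [← sublist_pair_iff hndK hyK' hxK' hxy]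
  have h2 : List.Sublist [y, x] w := h.trans (restrict_sublist w B)
  have h3 : List.Sublist ([y, x].filter (· ∈ K)) (restrict w K) := List.Sublist.filter _ h2
  have h4 : [y, x].filter (· ∈ K) = [y, x] := by
    rw [List.filter_eq_self]
    intro a ha
    simp only [List.mem_cons, List.not_mem_nil, or_false] at ha
    rcases ha with rfl | rfl
    · simpa using hBK hyB
    · simpa using hBK hxB
  rwa [h4] at h3

lemma exists_solution (P : SLInstance α) : Nonempty (SLSolution P) := by
  classical
  set f : ℕ × Finset α → List α := fun p => p.2.toList with hf
  set L : ℕ → List (ℕ × Finset α) := fun i => (P.inters.filter (fun p => p.1 = i)).toList with hL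
  set U : ℕ → Finset α := fun i => (P.inters.filter (fun p => p.1 = i)).sup (fun p => p.2) with hU
  set F : ℕ → List α := fun i => (L i).flatMap f with hF
  have hUAC : ∀ i, U i ⊆ P.AC i := by
    intro i a ha
    rw [hU, Finset.mem_sup] at ha
    obtain ⟨p, hp, hap⟩ := ha
    rw [Finset.mem_filter] at hp
    exact hp.2 ▸ (P.valid p hp.1).2 hap
  have hFmem : ∀ i a, a ∈ F i ↔ a ∈ U i := by
    intro i a
    rw [hF, List.mem_flatMap, hU, Finset.mem_sup]
    constructor
    · rintro ⟨p, hp, hap⟩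
      exact ⟨p, Finset.mem_toList.mp hp, by simpa [hf] using hap⟩
    · rintro ⟨p, hp, hap⟩
      exact ⟨p, Finset.mem_toList.mpr hp, by simpa [hf] using hap⟩
  have hFnd : ∀ i, (F i).Nodup := by
    intro i
    rw [hF, List.nodup_flatMap]
    refine ⟨fun p _ => Finset.nodup_toList _, ?_⟩
    refine (Finset.nodup_toList _).pairwise_of_forall_ne ?_
    intro p hp q hq hpq
    rw [Finset.mem_toList, Finset.mem_filter] at hp hq
    have hd := P.disj p hp.1 q hq.1 (hp.2.trans hq.2.symm) hpq
    intro a hap haq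
    simp only [hf] at hap haq
    exact Finset.disjoint_left.mp hd (by simpa using hap) (by simpa using haq)
  refine ⟨⟨fun i => F i ++ (P.AC i \ U i).toList, ?_, ?_, ?_⟩⟩
  · intro i
    rw [List.nodup_append']
    refine ⟨hFnd i, Finset.nodup_toList _, ?_⟩
    intro a haF haR
    rw [Finset.mem_toList, Finset.mem_sdiff] at haR
    exact haR.2 ((hFmem i a).mp haF)
  · intro i
    ext a
    simp only [List.toFinset_append, Finset.mem_union, List.mem_toFinset, Finset.mem_toList,
      Finset.mem_sdiff, hFmem i a]
    have := @hUAC i a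
    tauto
  · intro q hq
    have hqL : q ∈ L q.1 := by
      rw [hL, Finset.mem_toList, Finset.mem_filter]
      exact ⟨hq, rfl⟩
    obtain ⟨s, t, hst⟩ := List.append_of_mem hqL
    refine ⟨s.flatMap f, q.2.toList, t.flatMap f ++ (P.AC q.1 \ U q.1).toList, ?_, ?_⟩
    · show (L q.1).flatMap f ++ (P.AC q.1 \ U q.1).toList = _
      rw [hst]
      simp [List.flatMap_append, List.flatMap_cons, hf]
    · exact Finset.toList_toFinset _

def tmf (P : SLInstance α) (o : ℕ → List α) (j : ℕ) : ℕ :=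
  inv (restrict (o j) (P.AC j ∩ P.AC (j + 1))) (restrict (o (j + 1)) (P.AC j ∩ P.AC (j + 1)))

def Phi (P : SLInstance α) (o : ℕ → List α) : ℕ :=
  ∑ j ∈ Finset.range (P.len - 1), (P.len - j) * tmf P o j

lemma crS_eq_sum (P : SLInstance α) (S : SLSolution P) :
    crS P S = ∑ j ∈ Finset.range (P.len - 1), tmf P S.ord j := rfl

lemma key_lemma (P : SLInstance α) (S : SLSolution P)
    (hmin : ∀ T : SLSolution P, crS P S ≤ crS P T)
    (hPhi : ∀ T : SLSolution P, crS P T = crS P S → Phi P S.ord ≤ Phi P T.ord)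
    {i : ℕ} (hi1 : 1 ≤ i) (hi2 : i < P.len) {C : Finset α} (hC : (i, C) ∈ P.inters)
    (pre mid suf : List α) (hdec : S.ord i = pre ++ mid ++ suf)
    (hcons : ∀ q ∈ P.inters, q.1 = i → ∀ mid2 : List α, mid2.Perm mid →
      ConsecutiveIn q.2 (pre ++ mid2 ++ suf))
    (hsub : mid.toFinset ⊆ P.AC (i - 1) ∩ P.AC i) :
    restrict (S.ord i) mid.toFinset = restrict (S.ord (i - 1)) mid.toFinset := by
  classical
  by_contra hne
  set B := mid.toFinset with hB
  have hndi : (pre ++ mid ++ suf).Nodup := hdec ▸ S.nodup i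
  have hmid : restrict (S.ord i) B = mid := by rw [hdec]; exact restrict_middle hndi
  have hmnd : mid.Nodup := by rw [← hmid]; exact (S.nodup i).filter _
  have hw : (S.ord (i - 1)).Nodup := S.nodup (i - 1)
  have hBAC1 : B ⊆ P.AC (i - 1) := fun a ha => (Finset.mem_inter.mp (hsub ha)).1
  have hBAC2 : B ⊆ P.AC i := fun a ha => (Finset.mem_inter.mp (hsub ha)).2
  have htf1 : (restrict (S.ord (i - 1)) B).toFinset = B := by
    rw [toFinset_restrict, S.perm (i - 1)]
    exact Finset.inter_eq_right.mpr hBAC1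
  obtain ⟨u, x, y, v, hsplit, hinv⟩ := exists_adj_inversion
    (hw.filter _) hmnd htf1 (fun e => hne (hmid.trans e.symm))
  have hmsnd : (u ++ x :: y :: v).Nodup := hsplit ▸ hmnd
  obtain ⟨hxy, hxu, hyu⟩ := swap_facts hmsnd
  have hxB : x ∈ B := by rw [hB]; rw [hsplit]; simp
  have hyB : y ∈ B := by rw [hB]; rw [hsplit]; simp
  have hxK : x ∈ P.AC (i - 1) ∩ P.AC i := hsub hxB
  have hyK : y ∈ P.AC (i - 1) ∩ P.AC i := hsub hyB
  obtain ⟨A1, hA1⟩ : ∃ A1, A1 = pre ++ u := ⟨_, rfl⟩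
  obtain ⟨B1, hB1⟩ : ∃ B1, B1 = v ++ suf := ⟨_, rfl⟩
  have hOi : S.ord i = A1 ++ x :: y :: B1 := by
    rw [hdec, hsplit, hA1, hB1]; simp
  obtain ⟨newl, hnewl⟩ : ∃ nl, nl = A1 ++ y :: x :: B1 := ⟨_, rfl⟩
  have hnodup' : ∀ j, (Function.update S.ord i newl j).Nodup := by
    intro j
    rcases eq_or_ne j i with rfl | hji
    · rw [Function.update_self, hnewl]
      exact swap_nodup (hOi ▸ S.nodup j)
    · rw [Function.update_of_ne hji]; exact S.nodup j
  have hperm' : ∀ j, (Function.update S.ord i newl j).toFinset = P.AC j := by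
    intro j
    rcases eq_or_ne j i with rfl | hji
    · rw [Function.update_self, hnewl, toFinset_swap, ← hOi]
      exact S.perm j
    · rw [Function.update_of_ne hji]; exact S.perm j
  have hconsec' : ∀ q ∈ P.inters, ConsecutiveIn q.2 (Function.update S.ord i newl q.1) := by
    intro q hq
    rcases eq_or_ne q.1 i with hqi | hqi
    · rw [hqi, Function.update_self]
      have hp2 : (u ++ y :: x :: v).Perm mid := by
        rw [hsplit]
        exact List.Perm.append_left u (List.Perm.swap x y v)
      have := hcons q hq hqi (u ++ y :: x :: v) hp2
      have he : pre ++ (u ++ y :: x :: v) ++ suf = newl := by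
        rw [hnewl, hA1, hB1]; simp
      rwa [he] at this
    · rw [Function.update_of_ne hqi]; exact S.consec q hq
  obtain ⟨S', hS'ord⟩ : ∃ S' : SLSolution P, S'.ord = Function.update S.ord i newl :=
    ⟨⟨Function.update S.ord i newl, hnodup', hperm', hconsec'⟩, rfl⟩
  have hupd_ne : ∀ j, j ≠ i → S'.ord j = S.ord j := by
    intro j hj; rw [hS'ord]; exact Function.update_of_ne hj _ _
  have hupd_i : S'.ord i = newl := by rw [hS'ord]; exact Function.update_self _ _ _
  have hi1' : i - 1 + 1 = i := by omega
  have hresi : restrict (S.ord i) (P.AC (i - 1) ∩ P.AC i) =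
      restrict A1 (P.AC (i - 1) ∩ P.AC i) ++ x :: y :: restrict B1 (P.AC (i - 1) ∩ P.AC i) := by
    rw [hOi, restrict_append, restrict_cons_of_mem _ hxK, restrict_cons_of_mem _ hyK]
  have hresi' : restrict newl (P.AC (i - 1) ∩ P.AC i) =
      restrict A1 (P.AC (i - 1) ∩ P.AC i) ++ y :: x :: restrict B1 (P.AC (i - 1) ∩ P.AC i) := by
    rw [hnewl, restrict_append, restrict_cons_of_mem _ hyK, restrict_cons_of_mem _ hxK]
  have hx1 : x ∈ (restrict (S.ord (i - 1)) (P.AC (i - 1) ∩ P.AC i)).toFinset := by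
    rw [toFinset_restrict, S.perm]
    exact Finset.mem_inter.mpr ⟨(Finset.mem_inter.mp hxK).1, hxK⟩
  have hy1 : y ∈ (restrict (S.ord (i - 1)) (P.AC (i - 1) ∩ P.AC i)).toFinset := by
    rw [toFinset_restrict, S.perm]
    exact Finset.mem_inter.mpr ⟨(Finset.mem_inter.mp hyK).1, hyK⟩
  have hxw : x ∈ S.ord (i - 1) := by
    rw [← List.mem_toFinset, S.perm]
    exact hBAC1 hxB
  have hyw : y ∈ S.ord (i - 1) := by
    rw [← List.mem_toFinset, S.perm]
    exact hBAC1 hyB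
  have hyx1 : (restrict (S.ord (i - 1)) (P.AC (i - 1) ∩ P.AC i)).idxOf y <
      (restrict (S.ord (i - 1)) (P.AC (i - 1) ∩ P.AC i)).idxOf x :=
    before_mono hw hsub hxB hyB (Ne.symm hxy) hxw hyw hinv
  have f2 : tmf P S.ord (i - 1) = tmf P S'.ord (i - 1) + 1 := by
    simp only [tmf]
    rw [hi1', hupd_ne (i - 1) (by omega), hupd_i, hresi, hresi']
    exact inv_swap_snd (hresi ▸ ((S.nodup i).filter _)) hx1 hy1 hyx1
  have f3 : i < P.len - 1 → tmf P S'.ord i ≤ tmf P S.ord i + 1 := by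
    intro hilen
    simp only [tmf]
    rw [hupd_i, hupd_ne (i + 1) (by omega)]
    by_cases hx2 : x ∈ P.AC i ∩ P.AC (i + 1) <;> by_cases hy2 : y ∈ P.AC i ∩ P.AC (i + 1)
    · have e1 : restrict (S.ord i) (P.AC i ∩ P.AC (i + 1)) =
          restrict A1 (P.AC i ∩ P.AC (i + 1)) ++ x :: y :: restrict B1 (P.AC i ∩ P.AC (i + 1)) := by
        rw [hOi, restrict_append, restrict_cons_of_mem _ hx2, restrict_cons_of_mem _ hy2]
      have e2 : restrict newl (P.AC i ∩ P.AC (i + 1)) =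
          restrict A1 (P.AC i ∩ P.AC (i + 1)) ++ y :: x :: restrict B1 (P.AC i ∩ P.AC (i + 1)) := by
        rw [hnewl, restrict_append, restrict_cons_of_mem _ hy2, restrict_cons_of_mem _ hx2]
      rw [e1, e2]
      exact inv_swap_fst_le (e1 ▸ ((S.nodup i).filter _))
    · have e : restrict newl (P.AC i ∩ P.AC (i + 1)) = restrict (S.ord i) (P.AC i ∩ P.AC (i + 1)) := by
        rw [hnewl, hOi, restrict_append, restrict_append]
        simp only [restrict_cons_of_not_mem _ hy2, restrict_cons_of_mem _ hx2]
      rw [e]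
      exact Nat.le_succ _
    · have e : restrict newl (P.AC i ∩ P.AC (i + 1)) = restrict (S.ord i) (P.AC i ∩ P.AC (i + 1)) := by
        rw [hnewl, hOi, restrict_append, restrict_append]
        simp only [restrict_cons_of_not_mem _ hx2, restrict_cons_of_mem _ hy2]
      rw [e]
      exact Nat.le_succ _
    · have e : restrict newl (P.AC i ∩ P.AC (i + 1)) = restrict (S.ord i) (P.AC i ∩ P.AC (i + 1)) := by
        rw [hnewl, hOi, restrict_append, restrict_append]
        simp only [restrict_cons_of_not_mem _ hx2, restrict_cons_of_not_mem _ hy2]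
      rw [e]
      exact Nat.le_succ _
  have f1 : ∀ j, j ≠ i - 1 → j ≠ i → tmf P S'.ord j = tmf P S.ord j := by
    intro j hj1 hj2
    simp only [tmf]
    rw [hupd_ne j hj2, hupd_ne (j + 1) (by omega)]
  have hrange1 : i - 1 ∈ Finset.range (P.len - 1) := by
    simp only [Finset.mem_range]; omega
  have hcr' : crS P S' ≤ crS P S := by
    have hstep : ∀ j ∈ Finset.range (P.len - 1),
        tmf P S'.ord j + (if j = i - 1 then 1 else 0) ≤
        tmf P S.ord j + (if j = i then 1 else 0) := by
      intro j hj
      rcases eq_or_ne j (i - 1) with rfl | hj1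
      · rw [if_pos rfl, if_neg (by omega)]
        omega
      · rcases eq_or_ne j i with rfl | hj2
        · rw [if_neg hj1, if_pos rfl]
          have := f3 (by simpa using hj)
          omega
        · rw [if_neg hj1, if_neg hj2, f1 j hj1 hj2]
    have hsum := Finset.sum_le_sum hstep
    rw [Finset.sum_add_distrib, Finset.sum_add_distrib,
      Finset.sum_ite_eq' (Finset.range (P.len - 1)) (i - 1) (fun _ => 1),
      Finset.sum_ite_eq' (Finset.range (P.len - 1)) i (fun _ => 1), if_pos hrange1] at hsum
    rw [crS_eq_sum, crS_eq_sum]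
    split_ifs at hsum <;> omega
  have hPhiLt : Phi P S'.ord < Phi P S.ord := by
    have hstep : ∀ j ∈ Finset.range (P.len - 1),
        (P.len - j) * tmf P S'.ord j + (if j = i - 1 then P.len - (i - 1) else 0) ≤
        (P.len - j) * tmf P S.ord j + (if j = i then P.len - i else 0) := by
      intro j hj
      rcases eq_or_ne j (i - 1) with rfl | hj1
      · rw [if_pos rfl, if_neg (by omega), f2, Nat.mul_add, Nat.mul_one]
        simp
      · rcases eq_or_ne j i with rfl | hj2
        · rw [if_neg hj1, if_pos rfl]
          have h3 := f3 (by simpa using hj)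
          have h4 := Nat.mul_le_mul_left (P.len - j) h3
          rw [Nat.mul_add, Nat.mul_one] at h4
          exact h4
        · rw [if_neg hj1, if_neg hj2, f1 j hj1 hj2]
    have hsum := Finset.sum_le_sum hstep
    rw [Finset.sum_add_distrib, Finset.sum_add_distrib,
      Finset.sum_ite_eq' (Finset.range (P.len - 1)) (i - 1) (fun _ => P.len - (i - 1)),
      Finset.sum_ite_eq' (Finset.range (P.len - 1)) i (fun _ => P.len - i), if_pos hrange1] at hsum
    have hw1 : P.len - (i - 1) = (P.len - i) + 1 := by omega
    simp only [Phi]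
    split_ifs at hsum <;> omega
  have h5 : crS P S ≤ crS P S' := hmin S'
  have h6 : crS P S' = crS P S := le_antisymm hcr' h5
  have h7 := hPhi S' h6
  omega

end Aux

/-- Every storyline instance has a crossing-minimum solution `S = (π₀, …)` such
that for every time step `i ≥ 1` carrying exactly one interaction, with character
set `C`: `πᵢ` decomposes as `πᵢ = πᵢ[C_a] ⋆ πᵢ[C] ⋆ πᵢ[C_b]` for some sets
`C_a, C_b`, and (a) if `C_a ⊆ AC(i−1) ∩ AC(i)` then `πᵢ[C_a] = π_{i−1}[C_a]`;
(b) if `C ⊆ AC(i−1) ∩ AC(i)` then `πᵢ[C] = π_{i−1}[C]`; (c) if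
`C_b ⊆ AC(i−1) ∩ AC(i)` then `πᵢ[C_b] = π_{i−1}[C_b]`. -/
theorem exists_minimum_with_propagation {α : Type*} [DecidableEq α]
    (P : SLInstance α) :
    ∃ S : SLSolution P,
      (∀ S' : SLSolution P, crS P S ≤ crS P S') ∧
      (∀ i : ℕ, 1 ≤ i → i < P.len → ∀ C : Finset α, (i, C) ∈ P.inters →
        (∀ p ∈ P.inters, p.1 = i → p = (i, C)) →
        ∃ Ca Cb : Finset α,
          S.ord i = restrict (S.ord i) Ca ++ restrict (S.ord i) C ++ restrict (S.ord i) Cb ∧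
          (Ca ⊆ P.AC (i - 1) ∩ P.AC i →
            restrict (S.ord i) Ca = restrict (S.ord (i - 1)) Ca) ∧
          (C ⊆ P.AC (i - 1) ∩ P.AC i →
            restrict (S.ord i) C = restrict (S.ord (i - 1)) C) ∧
          (Cb ⊆ P.AC (i - 1) ∩ P.AC i →
            restrict (S.ord i) Cb = restrict (S.ord (i - 1)) Cb)) := by
  classical
  obtain ⟨S₀⟩ := exists_solution P
  obtain ⟨S₁, hS₁⟩ := Nat.sInf_mem
    (⟨crS P S₀, ⟨S₀, rfl⟩⟩ : Set.Nonempty {n | ∃ T : SLSolution P, crS P T = n})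
  have hS₁min : ∀ T : SLSolution P, crS P S₁ ≤ crS P T := by
    intro T; rw [hS₁]; exact Nat.sInf_le ⟨T, rfl⟩
  obtain ⟨S, hSc, hSPhi⟩ := Nat.sInf_mem
    (⟨Phi P S₁.ord, ⟨S₁, rfl, rfl⟩⟩ :
      Set.Nonempty {n | ∃ T : SLSolution P, crS P T = crS P S₁ ∧ Phi P T.ord = n})
  have hmin : ∀ T : SLSolution P, crS P S ≤ crS P T := by
    intro T; rw [hSc]; exact hS₁min T
  have hPhi : ∀ T : SLSolution P, crS P T = crS P S → Phi P S.ord ≤ Phi P T.ord := by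
    intro T hT; rw [hSPhi]; exact Nat.sInf_le ⟨T, by rw [hT, hSc], rfl⟩
  refine ⟨S, hmin, ?_⟩
  intro i hi1 hi2 C hC huniq
  obtain ⟨p, m, s, hdec0, hmC0⟩ := S.consec (i, C) hC
  have hdec : S.ord i = p ++ m ++ s := hdec0
  have hmC : m.toFinset = C := hmC0
  have hnd := S.nodup i
  have hndi : (p ++ m ++ s).Nodup := hdec ▸ hnd
  have h1 : restrict (S.ord i) p.toFinset = p := by
    rw [hdec, show p ++ m ++ s = [] ++ p ++ (m ++ s) by simp]
    exact restrict_middle (by simpa using hndi)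
  have h2 : restrict (S.ord i) C = m := by
    rw [hdec, ← hmC]
    exact restrict_middle hndi
  have h3 : restrict (S.ord i) s.toFinset = s := by
    rw [hdec, show p ++ m ++ s = (p ++ m) ++ s ++ [] by simp]
    exact restrict_middle (by simpa using hndi)
  refine ⟨p.toFinset, s.toFinset, ?_, ?_, ?_, ?_⟩
  · rw [h1, h2, h3, hdec]
  · intro hca
    exact key_lemma P S hmin hPhi hi1 hi2 hC [] p (m ++ s)
      (by rw [hdec]; simp)
      (by
        intro q hq hq1 mid2 hperm
        have hqC := huniq q hq hq1
        exact ⟨mid2, m, s, by simp, by rw [hqC]; exact hmC0⟩)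
      hca
  · intro hcb
    have := key_lemma P S hmin hPhi hi1 hi2 hC p m s hdec
      (by
        intro q hq hq1 mid2 hperm
        have hqC := huniq q hq hq1
        exact ⟨p, mid2, s, rfl, by rw [hqC]; exact (List.toFinset_eq_of_perm _ _ hperm).trans hmC0⟩)
      (by rw [hmC]; exact hcb)
    rwa [hmC] at this
  · intro hcc
    exact key_lemma P S hmin hPhi hi1 hi2 hC (p ++ m) s []
      (by rw [hdec]; simp)
      (by
        intro q hq hq1 mid2 hperm
        have hqC := huniq q hq hq1
        exact ⟨p, m, mid2, by simp, by rw [hqC]; exact hmC0⟩)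
      hcc
end
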